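/- arXiv:1710.05140 — 7 statements merged into one kernel-verified Lean document; each statement's English description precedes it below -/
import Mathlib

section
/- Let X be a graph, A a finite symmetric set of nonzero reals, and for vertices v, u of X write v ∼ u if N(v) = N(u) (equal open neighbourhoods). Let V′ contain exactly one vertex from each ∼-equivalence class and let X′ be the subgraph of X induced by V′. Then X admits a strict A-embedding in ℝ¹ if and only if X′ admits a strict injective A-embedding in ℝ¹. -/
theorem stmt3 {V : Type*} (X : SimpleGraph V) (A : Set ℝ) (hfin : A.Finite)
    (hsym : ∀ a ∈ A, -a ∈ A) (h0 : (0 : ℝ) ∉ A)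
    (V' : Set V)
    (hV' : ∀ v : V, ∃! u, u ∈ V' ∧ X.neighborSet v = X.neighborSet u) :
    -- X admits a strict A-embedding in ℝ¹
    (∃ φ : V → ℝ,
        (∀ x y, X.Adj x y → |φ x - φ y| ∈ A) ∧
        (∀ x y, x ≠ y → ¬X.Adj x y → |φ x - φ y| ∉ A)) ↔
    -- the induced subgraph X′ on V′ admits a strict injective A-embedding in ℝ¹
    (∃ ψ : V' → ℝ, Function.Injective ψ ∧
        (∀ x y : V', X.Adj x y → |ψ x - ψ y| ∈ A) ∧
        (∀ x y : V', x ≠ y → ¬X.Adj x y → |ψ x - ψ y| ∉ A)) := by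
  constructor
  · rintro ⟨φ, h1, h2⟩
    refine ⟨fun x => φ x, ?_, fun x y hxy => h1 x y hxy,
      fun x y hne hna => h2 x y (fun h => hne (Subtype.ext h)) hna⟩
    intro x y hxy
    have hxy' : φ (x : V) = φ (y : V) := hxy
    by_contra hne
    have hxyV : (x : V) ≠ (y : V) := fun h => hne (Subtype.ext h)
    have hzero : |φ (x : V) - φ (y : V)| = 0 := by rw [hxy', sub_self, abs_zero]
    have hnadj : ¬ X.Adj x y := fun h => h0 (hzero ▸ h1 _ _ h)
    have hnadj' : ¬ X.Adj y x := fun h => hnadj h.symm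
    have key : ∀ z, z ≠ (x : V) → z ≠ (y : V) → (X.Adj x z ↔ X.Adj y z) := by
      intro z hzx hzy
      constructor
      · intro h
        by_contra hny
        apply h2 (y : V) z (fun e => hzy e.symm) hny
        have hA : |φ (x : V) - φ z| ∈ A := h1 _ _ h
        rwa [hxy'] at hA
      · intro h
        by_contra hnx
        apply h2 (x : V) z (fun e => hzx e.symm) hnx
        have hA : |φ (y : V) - φ z| ∈ A := h1 _ _ h
        rwa [← hxy'] at hA
    have hNeq : X.neighborSet (x : V) = X.neighborSet (y : V) := by
      ext z
      simp only [SimpleGraph.mem_neighborSet]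
      rcases eq_or_ne z (x : V) with rfl | hzx
      · exact iff_of_false (X.loopless.irrefl _) hnadj'
      · rcases eq_or_ne z (y : V) with rfl | hzy
        · exact iff_of_false hnadj (X.loopless.irrefl _)
        · exact key z hzx hzy
    exact hxyV ((hV' (x : V)).unique ⟨x.2, rfl⟩ ⟨y.2, hNeq⟩)
  · rintro ⟨ψ, hinj, h1, h2⟩
    choose r h using hV'
    have hmem : ∀ v, r v ∈ V' := fun v => (h v).1.1
    have hadj : ∀ x z, X.Adj x z ↔ X.Adj (r x) z := by
      intro x z
      have := Set.ext_iff.mp (h x).1.2 z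
      simpa [SimpleGraph.mem_neighborSet] using this
    have hadj2 : ∀ x y, X.Adj x y ↔ X.Adj (r x) (r y) := by
      intro x y
      rw [hadj x y, X.adj_comm, hadj y (r x), X.adj_comm]
    refine ⟨fun v => ψ ⟨r v, hmem v⟩, ?_, ?_⟩
    · intro x y hxy
      exact h1 _ _ ((hadj2 x y).mp hxy)
    · intro x y hne hna hA
      by_cases hr : r x = r y
      · have he : ψ ⟨r x, hmem x⟩ = ψ ⟨r y, hmem y⟩ := by congr 1; exact Subtype.ext hr
        simp only [] at hA
        rw [he, sub_self, abs_zero] at hA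
        exact h0 hA
      · exact h2 ⟨r x, hmem x⟩ ⟨r y, hmem y⟩ (fun h' => hr (congrArg Subtype.val h'))
          (fun h' => hna ((hadj2 x y).mpr h')) hA
end

section
/- Let Γ = Cay(G, A) where G is a free finitely generated abelian group and A a finite symmetric generating set not containing 0. Let B_r be the subgraph of Γ induced on {x ∈ G : ρ(x) ≤ r} where ρ is the word metric. If λ is a subgraph of Γ and φ : B_r → λ is a graph isomorphism, then λ equals the translated ball B_r + φ(0) (as a subgraph). -/
def cay {k : ℕ} (A : Set (Fin k → ℤ)) : SimpleGraph (Fin k → ℤ) where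
  Adj x y := x ≠ y ∧ (y - x ∈ A ∨ x - y ∈ A)
  symm := ⟨fun x y h => ⟨h.1.symm, h.2.symm⟩⟩
  loopless := ⟨fun x h => h.1 rfl⟩

/-- The word metric of `ℤ^k` with respect to `A`: the least number of elements of `A`
summing to `v`. -/
noncomputable def wdist {k : ℕ} (A : Set (Fin k → ℤ)) (v : Fin k → ℤ) : ℕ :=
  sInf {n | ∃ l : List (Fin k → ℤ), l.length = n ∧ (∀ a ∈ l, a ∈ A) ∧ l.sum = v}

section Aux
variable {k : ℕ} {A : Set (Fin k → ℤ)}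


lemma wd_le (A : Set (Fin k → ℤ)) {v : Fin k → ℤ} {l : List (Fin k → ℤ)} (hl : ∀ a ∈ l, a ∈ A)
    (hs : l.sum = v) : wdist A v ≤ l.length :=
  Nat.sInf_le ⟨l, rfl, hl, hs⟩

lemma exists_list (hsym : ∀ x ∈ A, -x ∈ A)
    (hgen : AddSubgroup.closure A = ⊤) (v : Fin k → ℤ) :
    ∃ l : List (Fin k → ℤ), (∀ a ∈ l, a ∈ A) ∧ l.sum = v := by
  have hv : v ∈ AddSubgroup.closure A := by rw [hgen]; trivial
  induction hv using AddSubgroup.closure_induction with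
  | mem x hx => exact ⟨[x], by simpa using hx, by simp⟩
  | zero => exact ⟨[], by simp, by simp⟩
  | add x y _ _ hx hy =>
      obtain ⟨l1, h1, h1s⟩ := hx
      obtain ⟨l2, h2, h2s⟩ := hy
      refine ⟨l1 ++ l2, ?_, by simp [h1s, h2s]⟩
      intro a ha
      rcases List.mem_append.mp ha with h | h
      exacts [h1 a h, h2 a h]
  | neg x _ hx =>
      obtain ⟨l, h1, h1s⟩ := hx
      refine ⟨l.map (fun a => -a), ?_, ?_⟩
      · intro a ha
        obtain ⟨b, hb, rfl⟩ := List.mem_map.mp ha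
        exact hsym b (h1 b hb)
      · rw [← h1s]
        have : ∀ m : List (Fin k → ℤ), (m.map (fun a => -a)).sum = -m.sum := by
          intro m
          induction m with
          | nil => simp
          | cons a tl ih => simp [ih]; abel
        exact this l

lemma exists_min_list (hsym : ∀ x ∈ A, -x ∈ A)
    (hgen : AddSubgroup.closure A = ⊤) (v : Fin k → ℤ) :
    ∃ l : List (Fin k → ℤ), l.length = wdist A v ∧ (∀ a ∈ l, a ∈ A) ∧ l.sum = v := by
  obtain ⟨l, hl, hs⟩ := exists_list hsym hgen v
  have : wdist A v ∈ {n | ∃ l : List (Fin k → ℤ),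
      l.length = n ∧ (∀ a ∈ l, a ∈ A) ∧ l.sum = v} :=
    Nat.sInf_mem ⟨l.length, l, rfl, hl, hs⟩
  exact this

lemma wdist_zero (A : Set (Fin k → ℤ)) : wdist A 0 = 0 :=
  Nat.le_zero.mp (wd_le A (l := []) (by simp) (by simp))

lemma eq_zero_of_wdist (hsym : ∀ x ∈ A, -x ∈ A)
    (hgen : AddSubgroup.closure A = ⊤) {v : Fin k → ℤ} (h : wdist A v = 0) :
    v = 0 := by
  obtain ⟨l, hlen, _, hs⟩ := exists_min_list hsym hgen v
  rw [h, List.length_eq_zero_iff] at hlen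
  simp [hlen] at hs
  exact hs.symm

lemma wdist_add_le (hsym : ∀ x ∈ A, -x ∈ A)
    (hgen : AddSubgroup.closure A = ⊤) (v : Fin k → ℤ) {a : Fin k → ℤ}
    (ha : a ∈ A) : wdist A (v + a) ≤ wdist A v + 1 := by
  obtain ⟨l, hlen, hmem, hs⟩ := exists_min_list hsym hgen v
  have := wd_le A (v := v + a) (l := a :: l) ?_ ?_
  · simpa [hlen] using this
  · intro b hb
    rcases List.mem_cons.mp hb with rfl | h
    exacts [ha, hmem b h]
  · simp [hs]; abel

lemma wdist_peel (hsym : ∀ x ∈ A, -x ∈ A)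
    (hgen : AddSubgroup.closure A = ⊤) {v : Fin k → ℤ} {n : ℕ}
    (h : wdist A v = n + 1) : ∃ a ∈ A, wdist A (v - a) ≤ n := by
  obtain ⟨l, hlen, hmem, hs⟩ := exists_min_list hsym hgen v
  rw [h] at hlen
  match l, hlen with
  | a :: tl, hlen =>
    refine ⟨a, hmem a (by simp), ?_⟩
    have h2 : tl.sum = v - a := by simp at hs; rw [← hs]; abel
    have := wd_le A (fun b hb => hmem b (List.mem_cons_of_mem _ hb)) h2
    simp at hlen
    omega

lemma ball_finite (hfin : A.Finite) (hsym : ∀ x ∈ A, -x ∈ A)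
    (hgen : AddSubgroup.closure A = ⊤) (r : ℕ) :
    {x : Fin k → ℤ | wdist A x ≤ r}.Finite := by
  induction r with
  | zero =>
      have : {x : Fin k → ℤ | wdist A x ≤ 0} = {0} := by
        ext x
        simp only [Set.mem_setOf_eq, Nat.le_zero, Set.mem_singleton_iff]
        constructor
        · exact eq_zero_of_wdist hsym hgen
        · rintro rfl; exact wdist_zero A
      rw [this]; exact Set.finite_singleton 0
  | succ r ih =>
      have hsub : {x : Fin k → ℤ | wdist A x ≤ r + 1} ⊆
          {x | wdist A x ≤ r} ∪ ⋃ a ∈ A, (fun x => x + a) '' {x | wdist A x ≤ r} := by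
        intro x hx
        rcases le_or_gt (wdist A x) r with h | h
        · exact Or.inl h
        · have hx' : wdist A x = r + 1 := le_antisymm hx h
          obtain ⟨a, ha, hle⟩ := wdist_peel hsym hgen hx'
          refine Or.inr ?_
          exact Set.mem_biUnion ha ⟨x - a, hle, by simp⟩
      exact Set.Finite.subset (ih.union (hfin.biUnion fun a _ => ih.image _)) hsub

lemma cay_adj_mem {x y : Fin k → ℤ} (hsym : ∀ x ∈ A, -x ∈ A) (h : (cay A).Adj x y) :
    y - x ∈ A := by
  rcases h.2 with h2 | h2
  · exact h2
  · have := hsym _ h2; simpa using this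

lemma wdist_adj_le (hsym : ∀ x ∈ A, -x ∈ A) (hgen : AddSubgroup.closure A = ⊤)
    {x y : Fin k → ℤ} (h : (cay A).Adj x y) :
    wdist A y ≤ wdist A x + 1 := by
  have ha := cay_adj_mem hsym h
  have := wdist_add_le hsym hgen x ha
  simpa using this

lemma cay_adj_translate {x y t : Fin k → ℤ} :
    (cay A).Adj (x + t) (y + t) ↔ (cay A).Adj x y := by
  have hne : x + t ≠ y + t ↔ x ≠ y := by
    constructor
    · intro h hc; exact h (by rw [hc])
    · intro h hc
      apply h
      have := congrArg (fun z => z - t) hc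
      simpa using this
  have hd1 : y + t - (x + t) = y - x := by abel
  have hd2 : x + t - (y + t) = x - y := by abel
  constructor
  · rintro ⟨h1, h2⟩
    exact ⟨hne.mp h1, by rwa [hd1, hd2] at h2⟩
  · rintro ⟨h1, h2⟩
    exact ⟨hne.mpr h1, by rwa [hd1, hd2]⟩

lemma key (hfin : A.Finite) (hsym : ∀ x ∈ A, -x ∈ A) (h0A : (0 : Fin k → ℤ) ∉ A)
    (hgen : AddSubgroup.closure A = ⊤) :
    ∀ (r : ℕ) (f : (Fin k → ℤ) → (Fin k → ℤ)), f 0 = 0 →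
    Set.InjOn f {x | wdist A x ≤ r} →
    (∀ x y : Fin k → ℤ, wdist A x ≤ r → wdist A y ≤ r →
      (cay A).Adj x y → (cay A).Adj (f x) (f y)) →
    Set.BijOn f {x | wdist A x ≤ r} {x | wdist A x ≤ r} := by
  intro r
  induction r with
  | zero =>
      intro f hf0 _ _
      have hset : {x : Fin k → ℤ | wdist A x ≤ 0} = {0} := by
        ext x
        simp only [Set.mem_setOf_eq, Nat.le_zero, Set.mem_singleton_iff]
        exact ⟨eq_zero_of_wdist hsym hgen, fun h => h ▸ wdist_zero A⟩
      rw [hset]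
      exact ⟨fun x hx => by simp_all, fun x hx y hy _ => by simp_all,
        fun x hx => ⟨0, rfl, by simp_all⟩⟩
  | succ r ih =>
      intro f hf0 hinj hadj
      have hmono : {x : Fin k → ℤ | wdist A x ≤ r} ⊆ {x | wdist A x ≤ r + 1} :=
        fun x hx => le_trans hx (Nat.le_succ r)
      have ihb : Set.BijOn f {x | wdist A x ≤ r} {x | wdist A x ≤ r} :=
        ih f hf0 (hinj.mono hmono)
          (fun x y hx hy h => hadj x y (hmono hx) (hmono hy) h)
      have hmaps : Set.MapsTo f {x | wdist A x ≤ r + 1} {x | wdist A x ≤ r + 1} := by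
        intro x hx
        rcases le_or_gt (wdist A x) r with h | h
        · exact hmono (ihb.mapsTo h)
        · have hx' : wdist A x = r + 1 := le_antisymm hx h
          obtain ⟨a, ha, hle⟩ := wdist_peel hsym hgen hx'
          have hadjxy : (cay A).Adj x (x - a) := by
            refine ⟨fun hc => ?_, Or.inr (by simpa using ha)⟩
            · apply h0A
              have h4 : a = 0 := by
                have := congrArg (fun z => x - z) hc
                simpa using this.symm
              rwa [h4] at ha
          have h2 : (cay A).Adj (f x) (f (x - a)) :=
            hadj x (x - a) hx (hmono hle) hadjxy
          have h3 : wdist A (f (x - a)) ≤ r := ihb.mapsTo hle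
          have := wdist_adj_le hsym hgen h2.symm
          exact le_trans this (by omega)
      exact (Set.Finite.injOn_iff_bijOn_of_mapsTo
        (ball_finite hfin hsym hgen (r + 1)) hmaps).mp hinj

lemma perm_reflect {α : Type*} [Finite α] (e : Equiv.Perm α) (R : α → α → Prop)
    (h : ∀ a b, R a b → R (e a) (e b)) : ∀ a b, R (e a) (e b) → R a b := by
  have hpow : ∀ (n : ℕ) (a b), R a b → R ((e ^ n) a) ((e ^ n) b) := by
    intro n
    induction n with
    | zero => simp
    | succ n ihn =>
        intro a b hab
        have := ihn _ _ (h a b hab)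
        simpa [pow_succ, Equiv.Perm.mul_apply] using this
  intro a b hab
  have hord : orderOf e ≠ 0 := by
    have : IsOfFinOrder e := isOfFinOrder_of_finite e
    exact (orderOf_pos e).ne'
  obtain ⟨m, hm⟩ : ∃ m, orderOf e = m + 1 := ⟨orderOf e - 1, by omega⟩
  have := hpow m _ _ hab
  have heq : ∀ c : α, (e ^ m) (e c) = c := by
    intro c
    have : (e ^ (m + 1)) c = c := by
      rw [← hm, pow_orderOf_eq_one]; rfl
    simpa [pow_succ, Equiv.Perm.mul_apply] using this
  rwa [heq, heq] at this

end Aux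

lemma main_aux {k : ℕ} {A : Set (Fin k → ℤ)} (hfin : A.Finite)
    (hsym : ∀ x ∈ A, -x ∈ A) (h0A : (0 : Fin k → ℤ) ∉ A)
    (hgen : AddSubgroup.closure A = ⊤) (r : ℕ)
    (lam : (cay A).Subgraph)
    (φ : ((⊤ : (cay A).Subgraph).induce {x | wdist A x ≤ r}).coe ≃g lam.coe)
    (h0 : (0 : Fin k → ℤ) ∈ ((⊤ : (cay A).Subgraph).induce {x | wdist A x ≤ r}).verts)
    (t : Fin k → ℤ) (htdef : (φ ⟨0, h0⟩ : Fin k → ℤ) = t) :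
    lam.verts = (fun x => x + t) ''
        ((⊤ : (cay A).Subgraph).induce {x | wdist A x ≤ r}).verts ∧
      ∀ x y : Fin k → ℤ, lam.Adj x y ↔
        ((⊤ : (cay A).Subgraph).induce {x | wdist A x ≤ r}).Adj (x - t) (y - t) := by

  -- basic characterizations
  have hverts : ((⊤ : (cay A).Subgraph).induce {x | wdist A x ≤ r}).verts = {x | wdist A x ≤ r} := rfl
  have hBadj : ∀ a b : Fin k → ℤ,
      ((⊤ : (cay A).Subgraph).induce {x | wdist A x ≤ r}).Adj a b ↔ a ∈ {x | wdist A x ≤ r} ∧ b ∈ {x | wdist A x ≤ r} ∧ (cay A).Adj a b := by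
    intro a b
    simp [SimpleGraph.Subgraph.induce_adj, SimpleGraph.Subgraph.top_adj]
  classical
  -- the normalized map
  set f : (Fin k → ℤ) → (Fin k → ℤ) :=
    fun x => if h : x ∈ {x | wdist A x ≤ r} then (φ ⟨x, h⟩ : Fin k → ℤ) - t else x with hf
  have hfval : ∀ (x : Fin k → ℤ) (h : x ∈ {x | wdist A x ≤ r}), f x = (φ ⟨x, h⟩ : Fin k → ℤ) - t := by
    intro x h
    simp only [hf]
    exact dif_pos h
  have hf0 : f 0 = 0 := by
    rw [hfval 0 h0, htdef]
    simp
  have hinj : Set.InjOn f {x | wdist A x ≤ r} := by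
    intro x hx y hy hxy
    rw [hfval x hx, hfval y hy] at hxy
    have : (φ ⟨x, hx⟩ : Fin k → ℤ) = (φ ⟨y, hy⟩ : Fin k → ℤ) := by
      have := congrArg (fun z => z + t) hxy
      simpa using this
    have h2 : φ ⟨x, hx⟩ = φ ⟨y, hy⟩ := Subtype.ext this
    have h3 := φ.injective h2
    exact congrArg Subtype.val h3
  have hlamcoe : ∀ (u v : Fin k → ℤ) (hu : u ∈ {x | wdist A x ≤ r}) (hv : v ∈ {x | wdist A x ≤ r}),
      (cay A).Adj u v → lam.Adj (φ ⟨u, hu⟩ : Fin k → ℤ) (φ ⟨v, hv⟩ : Fin k → ℤ) := by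
    intro u v hu hv h
    have hBuv : ((⊤ : (cay A).Subgraph).induce {x | wdist A x ≤ r}).Adj u v := (hBadj u v).mpr ⟨hu, hv, h⟩
    have : lam.coe.Adj (φ ⟨u, hu⟩) (φ ⟨v, hv⟩) := φ.map_adj_iff.mpr hBuv
    exact this
  have hadj : ∀ x y : Fin k → ℤ, wdist A x ≤ r → wdist A y ≤ r →
      (cay A).Adj x y → (cay A).Adj (f x) (f y) := by
    intro x y hx hy h
    have hx' : x ∈ {x | wdist A x ≤ r} := hx
    have hy' : y ∈ {x | wdist A x ≤ r} := hy
    have hlam := hlamcoe x y hx' hy' h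
    have hcay : (cay A).Adj (φ ⟨x, hx'⟩ : Fin k → ℤ) (φ ⟨y, hy'⟩ : Fin k → ℤ) :=
      lam.adj_sub hlam
    rw [hfval x hx', hfval y hy']
    have := cay_adj_translate (A := A)
      (x := (φ ⟨x, hx'⟩ : Fin k → ℤ) - t) (y := (φ ⟨y, hy'⟩ : Fin k → ℤ) - t) (t := t)
    simp only [sub_add_cancel] at this
    exact this.mp hcay
  have hbij : Set.BijOn f {x | wdist A x ≤ r} {x | wdist A x ≤ r} := key hfin hsym h0A hgen r f hf0 hinj hadj
  -- vertex part
  have hvertpart : lam.verts = (fun x => x + t) '' {x | wdist A x ≤ r} := by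
    apply Set.eq_of_subset_of_subset
    · intro v hv
      set u : ((⊤ : (cay A).Subgraph).induce {x | wdist A x ≤ r}).verts := φ.symm ⟨v, hv⟩ with hu
      have huS : (u : Fin k → ℤ) ∈ {x | wdist A x ≤ r} := u.2
      have hphi : φ u = ⟨v, hv⟩ := by simp [hu]
      have hfv : f u = v - t := by
        rw [hfval _ huS]
        congr 1
        rw [show (⟨(u : Fin k → ℤ), huS⟩ : ((⊤ : (cay A).Subgraph).induce {x | wdist A x ≤ r}).verts) = u
          from Subtype.ext rfl, hphi]
      have : v - t ∈ {x | wdist A x ≤ r} := hfv ▸ hbij.mapsTo huS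
      exact ⟨v - t, this, by simp⟩
    · rintro _ ⟨x, hx, rfl⟩
      obtain ⟨y, hy, hfy⟩ := hbij.surjOn hx
      have : x + t = (φ ⟨y, hy⟩ : Fin k → ℤ) := by
        rw [hfval y hy] at hfy
        have := congrArg (fun z => z + t) hfy
        simpa using this.symm
      show x + t ∈ lam.verts
      rw [this]
      exact (φ ⟨y, hy⟩).2
  refine ⟨hvertpart, ?_⟩
  -- edge part
  have hfin' : Finite {x | wdist A x ≤ r} := (ball_finite hfin hsym hgen r).to_subtype
  set e : {x | wdist A x ≤ r} ≃ {x | wdist A x ≤ r} := Set.BijOn.equiv f hbij with he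
  have hecoe : ∀ a : {x | wdist A x ≤ r}, (e a : Fin k → ℤ) = f a := fun a => rfl
  have hpres : ∀ a b : {x | wdist A x ≤ r}, ((⊤ : (cay A).Subgraph).induce {x | wdist A x ≤ r}).Adj a b →
      ((⊤ : (cay A).Subgraph).induce {x | wdist A x ≤ r}).Adj (e a) (e b) := by
    intro a b hab
    rw [hBadj] at hab ⊢
    refine ⟨(e a).2, (e b).2, ?_⟩
    rw [hecoe, hecoe]
    exact hadj a b a.2 b.2 hab.2.2
  have hrefl := perm_reflect e
    (fun a b => ((⊤ : (cay A).Subgraph).induce {x | wdist A x ≤ r}).Adj a b) hpres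
  intro x y
  constructor
  · intro h
    have hx : x ∈ lam.verts := lam.edge_vert h
    have hy : y ∈ lam.verts := lam.edge_vert h.symm
    have hcay : (cay A).Adj x y := lam.adj_sub h
    obtain ⟨x', hx', hxeq⟩ := hvertpart ▸ hx
    obtain ⟨y', hy', hyeq⟩ := hvertpart ▸ hy
    have hxS : x - t ∈ {x | wdist A x ≤ r} := by simpa [← hxeq] using hx'
    have hyS : y - t ∈ {x | wdist A x ≤ r} := by simpa [← hyeq] using hy'
    rw [hBadj]
    refine ⟨hxS, hyS, ?_⟩
    have := cay_adj_translate (A := A) (x := x - t) (y := y - t) (t := t)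
    simp only [sub_add_cancel] at this
    exact this.mp hcay
  · intro h
    rw [hBadj] at h
    obtain ⟨hxS, hyS, hcay⟩ := h
    -- pull back along the bijection e
    set a : {x | wdist A x ≤ r} := e.symm ⟨x - t, hxS⟩ with ha
    set b : {x | wdist A x ≤ r} := e.symm ⟨y - t, hyS⟩ with hb
    have hea : e a = ⟨x - t, hxS⟩ := by rw [ha]; exact e.apply_symm_apply _
    have heb : e b = ⟨y - t, hyS⟩ := by rw [hb]; exact e.apply_symm_apply _
    have hRe : ((⊤ : (cay A).Subgraph).induce {x | wdist A x ≤ r}).Adj (e a) (e b) := by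
      rw [hea, heb, hBadj]
      exact ⟨hxS, hyS, hcay⟩
    have hRab : ((⊤ : (cay A).Subgraph).induce {x | wdist A x ≤ r}).Adj a b := hrefl a b hRe
    have haS : (a : Fin k → ℤ) ∈ {x | wdist A x ≤ r} := a.2
    have hbS : (b : Fin k → ℤ) ∈ {x | wdist A x ≤ r} := b.2
    have hlam : lam.Adj (φ ⟨(a : Fin k → ℤ), haS⟩ : Fin k → ℤ)
        (φ ⟨(b : Fin k → ℤ), hbS⟩ : Fin k → ℤ) := by
      have : lam.coe.Adj (φ ⟨(a : Fin k → ℤ), haS⟩) (φ ⟨(b : Fin k → ℤ), hbS⟩) := by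
        apply φ.map_adj_iff.mpr
        have : (⟨(a : Fin k → ℤ), haS⟩ : ((⊤ : (cay A).Subgraph).induce {x | wdist A x ≤ r}).verts) = a :=
          Subtype.ext rfl
        rw [this]
        have : (⟨(b : Fin k → ℤ), hbS⟩ : ((⊤ : (cay A).Subgraph).induce {x | wdist A x ≤ r}).verts) = b :=
          Subtype.ext rfl
        rw [this]
        exact hRab
      exact this
    have hxphi : (φ ⟨(a : Fin k → ℤ), haS⟩ : Fin k → ℤ) = x := by
      have h1 : f a = x - t := by
        rw [← hecoe, hea]
      rw [hfval _ haS] at h1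
      have hc : (⟨(a : Fin k → ℤ), haS⟩ : ((⊤ : (cay A).Subgraph).induce {x | wdist A x ≤ r}).verts) = a :=
        Subtype.ext rfl
      rw [hc] at h1 ⊢
      have := congrArg (fun z => z + t) h1
      simpa using this
    have hyphi : (φ ⟨(b : Fin k → ℤ), hbS⟩ : Fin k → ℤ) = y := by
      have h1 : f b = y - t := by
        rw [← hecoe, heb]
      rw [hfval _ hbS] at h1
      have hc : (⟨(b : Fin k → ℤ), hbS⟩ : ((⊤ : (cay A).Subgraph).induce {x | wdist A x ≤ r}).verts) = b :=
        Subtype.ext rfl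
      rw [hc] at h1 ⊢
      have := congrArg (fun z => z + t) h1
      simpa using this
    rwa [hxphi, hyphi] at hlam

theorem stmt5 {k : ℕ} (A : Set (Fin k → ℤ)) (hfin : A.Finite)
    (hsym : ∀ x ∈ A, -x ∈ A) (h0A : (0 : Fin k → ℤ) ∉ A)
    (hgen : AddSubgroup.closure A = ⊤) (r : ℕ)
    -- the ball of radius r, as the induced subgraph of Γ on {x | ρ(x) ≤ r}
    (B : (cay A).Subgraph)
    (hB : B = (⊤ : (cay A).Subgraph).induce {x | wdist A x ≤ r})
    (lam : (cay A).Subgraph)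
    (φ : B.coe ≃g lam.coe)
    (h0 : (0 : Fin k → ℤ) ∈ B.verts) :
    lam.verts = (fun x => x + (φ ⟨0, h0⟩ : Fin k → ℤ)) '' B.verts ∧
      ∀ x y : Fin k → ℤ, lam.Adj x y ↔
        B.Adj (x - (φ ⟨0, h0⟩ : Fin k → ℤ)) (y - (φ ⟨0, h0⟩ : Fin k → ℤ)) := by
  subst hB
  exact main_aux hfin hsym h0A hgen r lam φ h0 _ rfl
end

section
/- Let A be a finite symmetric generating set of ℤ^k not containing 0, and view elements of A as vectors in ℝ^k. Call x ∈ A primary if for every integer t ≥ 0 the word-metric distance ρ(tx) equals t and tx has a unique shortest representation (the unique shortest path from 0 to tx in Cay(ℤ^k, A) consists of t steps by x). Then x ∈ A is primary if and only if x is a vertex (extreme point) of the convex hull of A in ℝ^k. -/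
/-- `x` is primary: for every `t ≥ 0`, `ρ(tx) = t` and the only representation of
`tx` as a sum of `t` elements of `A` consists of `t` copies of `x` (so the shortest
path from `0` to `tx` is unique). -/
def IsPrimary {k : ℕ} (A : Set (Fin k → ℤ)) (x : Fin k → ℤ) : Prop :=
  ∀ t : ℕ, wdist A (t • x) = t ∧
    ∀ l : List (Fin k → ℤ), (∀ a ∈ l, a ∈ A) → l.length = t → l.sum = t • x →
      l = List.replicate t x

/-- `x` is a vertex (extreme point) of `Conv A`, viewed in `ℝ^k`: some linear
functional is strictly larger at `x` than at every other point of `A`. -/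
def IsHullVertex {k : ℕ} (A : Set (Fin k → ℤ)) (x : Fin k → ℤ) : Prop :=
  ∃ l : (Fin k → ℝ) →ₗ[ℝ] ℝ, ∀ y ∈ A, y ≠ x →
    l (fun i => (y i : ℝ)) < l (fun i => (x i : ℝ))

namespace Stmt7Aux


/-- cast ℤ^k → ℝ^k as an additive monoid hom -/
def cR {k : ℕ} : (Fin k → ℤ) →+ (Fin k → ℝ) where
  toFun v := fun i => (v i : ℝ)
  map_zero' := by funext i; simp
  map_add' u v := by funext i; simp

lemma cR_inj {k : ℕ} : Function.Injective (cR (k := k)) := by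
  intro u v h
  funext i
  have h2 : ((u i : ℝ)) = (v i : ℝ) := congrFun h i
  exact_mod_cast h2

lemma list_map_sum_le {α : Type*} (g : α → ℝ) (c : ℝ) :
    ∀ L : List α, (∀ a ∈ L, g a ≤ c) → (L.map g).sum ≤ L.length * c := by
  intro L
  induction L with
  | nil => simp
  | cons a L ih =>
    intro h
    simp only [List.map_cons, List.sum_cons, List.length_cons]
    have h1 := h a (by simp)
    have h2 := ih (fun b hb => h b (by simp [hb]))
    push_cast
    nlinarith
  
lemma list_map_sum_eq {α : Type*} (g : α → ℝ) (c : ℝ) :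
    ∀ L : List α, (∀ a ∈ L, g a ≤ c) → (L.map g).sum = L.length * c →
      ∀ a ∈ L, g a = c := by
  intro L
  induction L with
  | nil => simp
  | cons a L ih =>
    intro h heq b hb
    have h1 := h a (by simp)
    have h2 := list_map_sum_le g c L (fun b hb => h b (by simp [hb]))
    simp only [List.map_cons, List.sum_cons, List.length_cons] at heq
    have ha : g a = c := by push_cast at heq; nlinarith
    rcases List.mem_cons.1 hb with rfl | hb'
    · exact ha
    · apply ih (fun b hb => h b (by simp [hb])) _ b hb'
      rw [ha] at heq; push_cast at heq; linarith



open Matrix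

lemma rat_coeffs {k : ℕ} {ι : Type} [Fintype ι] [DecidableEq ι]
    (v : ι → (Fin k → ℤ)) (w : ι → ℝ) (d : Fin k → ℤ)
    (hli : LinearIndependent ℝ (fun i => (fun s => ((v i s : ℝ)))))
    (heq : ∀ s, (d s : ℝ) = ∑ i, w i * (v i s : ℝ)) :
    ∃ q : ℕ, 0 < q ∧ ∀ i, ∃ m : ℤ, (m : ℝ) = q * w i := by
  set G₀ : Matrix ι ι ℤ := Matrix.of fun i j => ∑ s, v i s * v j s with hG₀
  set Gr : Matrix ι ι ℝ := G₀.map (Int.castRingHom ℝ) with hGr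
  set b₀ : ι → ℤ := fun i => ∑ s, v i s * d s with hb₀
  set br : ι → ℝ := fun i => ((b₀ i : ℤ) : ℝ) with hbr
  have hGrij : ∀ i j, Gr i j = ∑ s, (v i s : ℝ) * (v j s : ℝ) := by
    intro i j
    simp only [hGr, hG₀, Matrix.map_apply, Matrix.of_apply, Int.coe_castRingHom]
    push_cast
    rfl
  have hdet : Gr.det ≠ 0 := by
    intro h0
    obtain ⟨u, hu, hmul⟩ := (Matrix.exists_mulVec_eq_zero_iff).2 h0
    have hsq : ∑ s, (∑ i, u i * (v i s : ℝ))^2 = 0 := by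
      have e1 : ∀ s : Fin k, (∑ i, u i * (v i s : ℝ))^2
          = ∑ i, ∑ j, (u i * (v i s : ℝ)) * (u j * (v j s : ℝ)) := by
        intro s
        rw [sq, Finset.sum_mul_sum]
      rw [Finset.sum_congr rfl (fun s _ => e1 s), Finset.sum_comm]
      have e2 : ∀ i, ∑ s, ∑ j, (u i * (v i s : ℝ)) * (u j * (v j s : ℝ))
          = u i * (Gr.mulVec u) i := by
        intro i
        rw [Finset.sum_comm, Matrix.mulVec, dotProduct, Finset.mul_sum]
        refine Finset.sum_congr rfl fun j _ => ?_
        rw [hGrij, Finset.sum_mul, Finset.mul_sum]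
        refine Finset.sum_congr rfl fun s _ => ?_
        ring
      rw [Finset.sum_congr rfl (fun i _ => e2 i), hmul]
      simp
    have hz : ∀ s : Fin k, ∑ i, u i * (v i s : ℝ) = 0 := by
      intro s
      have h6 := (Finset.sum_eq_zero_iff_of_nonneg (fun s _ => sq_nonneg _)).1 hsq s
        (Finset.mem_univ s)
      exact pow_eq_zero_iff two_ne_zero |>.mp h6
    have : ∀ i, u i = 0 := by
      apply Fintype.linearIndependent_iff.1 hli u
      funext s
      have h7 := hz s
      simp only [Finset.sum_apply, Pi.smul_apply, smul_eq_mul]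
      simpa using h7
    exact hu (funext this)
  have hmv : Gr.mulVec w = br := by
    funext i
    rw [Matrix.mulVec, dotProduct]
    have e3 : br i = ∑ s, (v i s : ℝ) * (d s : ℝ) := by
      simp only [hbr, hb₀]
      push_cast
      rfl
    rw [e3]
    calc ∑ j, Gr i j * w j
        = ∑ j, ∑ s, (v i s : ℝ) * (v j s : ℝ) * w j :=
          Finset.sum_congr rfl fun j _ => by rw [hGrij, Finset.sum_mul]
      _ = ∑ s, ∑ j, (v i s : ℝ) * (v j s : ℝ) * w j := Finset.sum_comm
      _ = ∑ s, (v i s : ℝ) * (d s : ℝ) := by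
          refine Finset.sum_congr rfl fun s _ => ?_
          rw [heq s, Finset.mul_sum]
          exact Finset.sum_congr rfl fun j _ => by ring
  have hcr : Matrix.cramer Gr br = Gr.det • w := by
    by_contra hne
    have hnz : Matrix.cramer Gr br - Gr.det • w ≠ 0 := sub_ne_zero.2 hne
    have hz2 : Gr.mulVec (Matrix.cramer Gr br - Gr.det • w) = 0 := by
      rw [Matrix.mulVec_sub, Matrix.mulVec_cramer, Matrix.mulVec_smul, hmv, sub_self]
    exact hdet ((Matrix.exists_mulVec_eq_zero_iff).1 ⟨_, hnz, hz2⟩)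
  have hcast : ∀ i, ((Matrix.cramer G₀ b₀ i : ℤ) : ℝ) = Matrix.cramer Gr br i := by
    intro i
    rw [Matrix.cramer_apply, Matrix.cramer_apply]
    have e4 : Gr.updateCol i br = (G₀.updateCol i b₀).map (Int.castRingHom ℝ) := by
      rw [Matrix.map_updateCol]
      rfl
    rw [e4]
    exact RingHom.map_det (Int.castRingHom ℝ) _
  have hD : ((G₀.det : ℤ) : ℝ) = Gr.det := RingHom.map_det (Int.castRingHom ℝ) G₀
  have hD0 : G₀.det ≠ 0 := by
    intro h
    rw [h] at hD
    exact hdet (by exact_mod_cast hD.symm)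
  have hkey : ∀ i, ((Matrix.cramer G₀ b₀ i : ℤ) : ℝ) = (G₀.det : ℝ) * w i := by
    intro i
    rw [hcast i, hcr, hD]
    simp
  refine ⟨G₀.det.natAbs, Int.natAbs_pos.2 hD0, fun i => ?_⟩
  by_cases hpos : 0 ≤ G₀.det
  · refine ⟨Matrix.cramer G₀ b₀ i, ?_⟩
    rw [hkey i]
    congr 1
    have e5 : (G₀.det.natAbs : ℤ) = G₀.det := Int.natAbs_of_nonneg hpos
    rw [← Int.cast_natCast (R := ℝ), e5]
  · refine ⟨-(Matrix.cramer G₀ b₀ i), ?_⟩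
    push_cast
    rw [hkey i]
    have e5 : (G₀.det.natAbs : ℤ) = -G₀.det := by omega
    rw [← Int.cast_natCast (R := ℝ), e5]
    push_cast
    ring



lemma vertex_primary {k : ℕ} (A : Set (Fin k → ℤ))
    (hsym : ∀ x ∈ A, -x ∈ A) (h0A : (0 : Fin k → ℤ) ∉ A)
    (x : Fin k → ℤ) (hx : x ∈ A) (hv : IsHullVertex A x) : IsPrimary A x := by
  obtain ⟨l, hl⟩ := hv
  set f : (Fin k → ℤ) →+ ℝ := l.toAddMonoidHom.comp cR with hf
  have hfval : ∀ v : Fin k → ℤ, f v = l (fun i => (v i : ℝ)) := fun v => rfl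
  have hflt : ∀ y ∈ A, y ≠ x → f y < f x := by
    intro y hy hne
    rw [hfval, hfval]
    exact hl y hy hne
  have hxne0 : x ≠ 0 := fun h => h0A (h ▸ hx)
  have hnegne : -x ≠ x := by
    intro h
    apply hxne0
    funext i
    have h2 : -(x i) = x i := congrFun h i
    simp only [Pi.zero_apply]
    omega
  have hxpos : 0 < f x := by
    have h1 := hflt (-x) (hsym x hx) hnegne
    rw [map_neg] at h1
    linarith
  have hle : ∀ y ∈ A, f y ≤ f x := by
    intro y hy
    by_cases h : y = x
    · rw [h]
    · exact (hflt y hy h).le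
  intro t
  have hmem : t ∈ {n | ∃ L : List (Fin k → ℤ),
      L.length = n ∧ (∀ a ∈ L, a ∈ A) ∧ L.sum = t • x} := by
    exact ⟨List.replicate t x, by simp, fun a ha => by
      rw [List.eq_of_mem_replicate ha]; exact hx, List.sum_replicate t x⟩
  have key : ∀ L : List (Fin k → ℤ), (∀ a ∈ L, a ∈ A) → L.sum = t • x →
      (t : ℝ) * f x ≤ (L.length : ℝ) * f x ∧
      ((L.map f).sum = t * f x) := by
    intro L hLA hsum
    have h1 : (L.map f).sum = f L.sum := (map_list_sum f L).symm
    have h2 : f L.sum = t * f x := by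
      rw [hsum, map_nsmul, nsmul_eq_mul]
    have h3 : (L.map f).sum ≤ L.length * f x :=
      list_map_sum_le f (f x) L (fun a ha => hle a (hLA a ha))
    constructor
    · rw [← h2, ← h1]; exact h3
    · rw [h1, h2]
  constructor
  · refine le_antisymm (Nat.sInf_le hmem) (le_csInf ⟨t, hmem⟩ ?_)
    rintro n ⟨L, hlen, hLA, hsum⟩
    have := (key L hLA hsum).1
    rw [hlen] at this
    exact_mod_cast le_of_mul_le_mul_right this hxpos
  · intro L hLA hlen hsum
    have h2 := (key L hLA hsum).2
    rw [← hlen] at h2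
    have hall := list_map_sum_eq f (f x) L (fun a ha => hle a (hLA a ha)) h2
    refine List.eq_replicate_iff.2 ⟨hlen, fun b hb => ?_⟩
    by_contra hne
    exact absurd (hall b hb) (ne_of_lt (hflt b (hLA b hb) hne))



lemma not_vertex_not_primary {k : ℕ} (A : Set (Fin k → ℤ)) (hfin : A.Finite)
    (x : Fin k → ℤ) (hx : x ∈ A) (hnv : ¬ IsHullVertex A x) : ¬ IsPrimary A x := by
  intro hp
  classical
  set S : Set (Fin k → ℝ) := (fun v : Fin k → ℤ => fun i => ((v i : ℝ))) '' (A \ {x}) with hS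
  have hSfin : S.Finite := (hfin.subset Set.diff_subset).image _
  -- x is in the convex hull of the other points
  have hmem : (fun i => ((x i : ℝ))) ∈ convexHull ℝ S := by
    by_contra hnot
    have hcl : IsClosed (convexHull ℝ S) := (hSfin.isCompact_convexHull ℝ).isClosed
    obtain ⟨f, u, hfu, hux⟩ :=
      geometric_hahn_banach_closed_point (convex_convexHull ℝ S) hcl hnot
    refine hnv ⟨f.toLinearMap, fun y hy hne => ?_⟩
    have hyS : (fun i => ((y i : ℝ))) ∈ S := ⟨y, ⟨hy, fun h => hne h⟩, rfl⟩
    exact lt_trans (hfu _ (subset_convexHull ℝ S hyS)) hux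
  obtain ⟨ι, hι, z, w, hrange, haff, hwpos, hwsum, hwz⟩ :=
    eq_pos_convex_span_of_mem_convexHull hmem
  letI instFi : Fintype ι := hι
  letI instDe : DecidableEq ι := Classical.decEq ι
  have hchoice : ∀ i : ι, ∃ a, a ∈ A \ {x} ∧ (fun s => ((a s : ℝ))) = z i := by
    intro i
    obtain ⟨a, ha, haz⟩ := hrange ⟨i, rfl⟩
    exact ⟨a, ha, haz⟩
  choose u' hu'A hu'z using hchoice
  have hu'ne : ∀ i, u' i ≠ x := fun i => (hu'A i).2
  have hu'mem : ∀ i, u' i ∈ A := fun i => (hu'A i).1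
  have hzs : ∀ i s, z i s = (u' i s : ℝ) := fun i s => (congrFun (hu'z i) s).symm
  rcases isEmpty_or_nonempty ι with he | hne
  · rw [Finset.univ_eq_empty, Finset.sum_empty] at hwsum
    exact one_ne_zero hwsum.symm
  set i₀ : ι := Classical.arbitrary ι with hi₀
  -- coordinatewise identity from the convex combination
  have h1 : ∀ s, ∑ i : ι, w i * z i s = (x s : ℝ) := by
    intro s
    have := congrFun hwz s
    simpa [Finset.sum_apply] using this
  -- linear independence of the differences
  have hli0 := (affineIndependent_iff_linearIndependent_vsub ℝ z i₀).1 haff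
  set d : Fin k → ℤ := x - u' i₀ with hd
  set v' : {i : ι // i ≠ i₀} → (Fin k → ℤ) := fun i => u' ↑i - u' i₀ with hv'
  have hli : LinearIndependent ℝ (fun i : {i : ι // i ≠ i₀} => (fun s => ((v' i s : ℝ)))) := by
    have hfe : (fun i : {i : ι // i ≠ i₀} => (fun s => ((v' i s : ℝ))))
        = fun i : {i : ι // i ≠ i₀} => z ↑i -ᵥ z i₀ := by
      funext i s
      simp only [hv', vsub_eq_sub, Pi.sub_apply, hzs]
      push_cast
      rfl
    rw [hfe]
    exact hli0
  have hsum_all : ∀ s, ∑ i : ι, w i * (z i s - z i₀ s) = (x s : ℝ) - z i₀ s := by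
    intro s
    calc ∑ i : ι, w i * (z i s - z i₀ s)
        = (∑ i : ι, w i * z i s) - (∑ i : ι, w i) * z i₀ s := by
          rw [Finset.sum_mul, ← Finset.sum_sub_distrib]
          exact Finset.sum_congr rfl fun i _ => by ring
      _ = (x s : ℝ) - z i₀ s := by rw [h1, hwsum, one_mul]
  have heq : ∀ s, (d s : ℝ) = ∑ i : {i : ι // i ≠ i₀}, w ↑i * (v' i s : ℝ) := by
    intro s
    have est := Finset.sum_subtype (p := fun i : ι => i ≠ i₀) (F := inferInstance) (Finset.univ.erase i₀)
      (fun i => by simp [Finset.mem_erase]) (fun i => w i * (z i s - z i₀ s))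
    have e1 : ∑ i : {i : ι // i ≠ i₀}, w ↑i * (v' i s : ℝ)
        = ∑ i ∈ Finset.univ.erase i₀, w i * (z i s - z i₀ s) := by
      rw [est]
      refine Finset.sum_congr rfl fun i _ => ?_
      simp only [hv', Pi.sub_apply, hzs]
      push_cast
      ring
    rw [e1]
    have e2 : ∑ i ∈ Finset.univ.erase i₀, w i * (z i s - z i₀ s)
        = ∑ i : ι, w i * (z i s - z i₀ s) := by
      rw [← Finset.sum_erase_add Finset.univ _ (Finset.mem_univ i₀)]
      simp
    rw [e2, hsum_all s, hd]
    simp only [Pi.sub_apply, hzs]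
    push_cast
    ring
  obtain ⟨q, hq, hm⟩ := rat_coeffs v' (fun i => w ↑i) d hli heq
  choose m' hm' using hm
  -- integer weights
  set M : ι → ℤ := fun i => if h : i = i₀ then (q : ℤ) - ∑ i' : {i : ι // i ≠ i₀}, m' i'
    else m' ⟨i, h⟩ with hM
  have hw_split : w i₀ + ∑ i' : {i : ι // i ≠ i₀}, w ↑i' = 1 := by
    have est := Finset.sum_subtype (p := fun i : ι => i ≠ i₀) (F := inferInstance) (Finset.univ.erase i₀)
      (fun i => by simp [Finset.mem_erase]) w
    rw [← est, ← hwsum, ← Finset.sum_erase_add Finset.univ w (Finset.mem_univ i₀)]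
    ring
  have hMcast : ∀ i, (M i : ℝ) = q * w i := by
    intro i
    by_cases h : i = i₀
    · have hMi : M i = (q : ℤ) - ∑ i' : {i : ι // i ≠ i₀}, m' i' := by
        simp only [hM]
        rw [dif_pos h]
      rw [hMi]
      push_cast
      have hs1 : ∑ i' : {j : ι // j ≠ i₀}, ((m' i' : ℤ) : ℝ)
          = (q : ℝ) * ∑ i' : {j : ι // j ≠ i₀}, w ↑i' := by
        rw [Finset.mul_sum]
        exact Finset.sum_congr rfl fun i' _ => hm' i'
      rw [hs1]
      have hw' : ∑ i' : {j : ι // j ≠ i₀}, w ↑i' = 1 - w i₀ := by linarith [hw_split]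
      rw [hw', h]
      ring
    · have hMi : M i = m' ⟨i, h⟩ := by
        simp only [hM]
        rw [dif_neg h]
      rw [hMi]
      exact hm' ⟨i, h⟩
  have hMnonneg : ∀ i, 0 ≤ M i := by
    intro i
    have : (0 : ℝ) ≤ (M i : ℝ) := by
      rw [hMcast i]
      have hq' : (0 : ℝ) < q := by exact_mod_cast hq
      exact le_of_lt (mul_pos hq' (hwpos i))
    exact_mod_cast this
  have hMsum : ∑ i : ι, M i = (q : ℤ) := by
    have : ((∑ i : ι, M i : ℤ) : ℝ) = ((q : ℤ) : ℝ) := by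
      push_cast
      rw [Finset.sum_congr rfl fun i _ => hMcast i, ← Finset.mul_sum, hwsum, mul_one]
    exact_mod_cast this
  have hMcomb : ∑ i : ι, M i • u' i = (q : ℤ) • x := by
    funext s
    have hcast : ((∑ i : ι, M i • u' i) s : ℝ) = (((q : ℤ) • x) s : ℝ) := by
      have lhs : ((∑ i : ι, M i • u' i) s : ℤ) = ∑ i : ι, M i * u' i s := by
        simp [Finset.sum_apply]
      have rhs : (((q : ℤ) • x) s : ℤ) = (q : ℤ) * x s := by simp
      rw [lhs, rhs]
      push_cast
      rw [Finset.sum_congr rfl (fun i _ => by rw [hMcast i, ← hzs i s] :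
        ∀ i ∈ Finset.univ, (M i : ℝ) * (u' i s : ℝ) = (q : ℝ) * w i * z i s)]
      have : ∑ i : ι, (q : ℝ) * w i * z i s = (q : ℝ) * ∑ i : ι, w i * z i s := by
        rw [Finset.mul_sum]
        exact Finset.sum_congr rfl fun i _ => by ring
      rw [this, h1 s]
    exact_mod_cast hcast
  -- build the contradicting list
  set L : List (Fin k → ℤ) :=
    (Finset.univ : Finset ι).toList.flatMap (fun i => List.replicate (M i).toNat (u' i)) with hL
  have hLmem : ∀ a ∈ L, a ∈ A := by
    intro a ha
    rw [hL, List.mem_flatMap] at ha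
    obtain ⟨i, _, hai⟩ := ha
    rw [List.eq_of_mem_replicate hai]
    exact hu'mem i
  have hLlen : L.length = q := by
    rw [hL, List.length_flatMap]
    have : ((Finset.univ : Finset ι).toList.map
        (List.length ∘ fun i => List.replicate (M i).toNat (u' i))).sum
        = ∑ i : ι, (M i).toNat := by
      rw [← Finset.sum_map_toList]
      congr 1
      exact List.map_congr_left fun i _ => by simp
    simp only [Function.comp_def] at this
    rw [this]
    have : ((∑ i : ι, (M i).toNat : ℕ) : ℤ) = (q : ℤ) := by
      push_cast
      rw [Finset.sum_congr rfl fun i _ => Int.toNat_of_nonneg (hMnonneg i)]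
      exact hMsum
    exact_mod_cast this
  have hLsum : L.sum = q • x := by
    rw [hL, List.flatMap, List.sum_flatten, List.map_map]
    have e1 : ((Finset.univ : Finset ι).toList.map
        (List.sum ∘ fun i => List.replicate (M i).toNat (u' i))).sum
        = ∑ i : ι, (M i).toNat • u' i := by
      rw [← Finset.sum_map_toList]
      congr 1
      exact List.map_congr_left fun i _ => by simp [List.sum_replicate]
    rw [e1]
    have e2 : ∑ i : ι, (M i).toNat • u' i = ∑ i : ι, M i • u' i := by
      refine Finset.sum_congr rfl fun i _ => ?_
      rw [← natCast_zsmul, Int.toNat_of_nonneg (hMnonneg i)]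
    rw [e2, hMcomb, natCast_zsmul]
  have hrep := (hp q).2 L hLmem hLlen hLsum
  -- find a positive weight
  have hex : ∃ i : ι, 0 < M i := by
    by_contra hno
    push_neg at hno
    have : ∑ i : ι, M i = 0 :=
      Finset.sum_eq_zero fun i _ => le_antisymm (hno i) (hMnonneg i)
    rw [hMsum] at this
    omega
  obtain ⟨i₁, hi₁⟩ := hex
  have hmemL : u' i₁ ∈ L := by
    rw [hL, List.mem_flatMap]
    exact ⟨i₁, by simp [Finset.mem_toList], List.mem_replicate.2 ⟨by omega, rfl⟩⟩
  rw [hrep] at hmemL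
  exact hu'ne i₁ (List.eq_of_mem_replicate hmemL)

end Stmt7Aux

theorem stmt7 {k : ℕ} (A : Set (Fin k → ℤ)) (hfin : A.Finite)
    (hsym : ∀ x ∈ A, -x ∈ A) (h0A : (0 : Fin k → ℤ) ∉ A)
    (hgen : AddSubgroup.closure A = ⊤) (x : Fin k → ℤ) (hx : x ∈ A) :
    IsPrimary A x ↔ IsHullVertex A x := by
  constructor
  · intro hp
    by_contra hnv
    exact Stmt7Aux.not_vertex_not_primary A hfin x hx hnv hp
  · exact Stmt7Aux.vertex_primary A hsym h0A x hx
end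

section
/- Let A be a finite symmetric generating set of ℤ^k not containing 0, with x ∈ A a vertex of the convex hull of A. Then for every t ≥ 0, ρ(tx) = t, and moreover the only way to write tx as a sum of t elements of A is with all summands equal to x. -/
theorem stmt8 {k : ℕ} (A : Set (Fin k → ℤ)) (hfin : A.Finite)
    (hsym : ∀ x ∈ A, -x ∈ A) (h0A : (0 : Fin k → ℤ) ∉ A)
    (hgen : AddSubgroup.closure A = ⊤) (x : Fin k → ℤ) (hx : x ∈ A)
    -- x is a vertex of Conv A: a linear functional separates it strictly
    (l : (Fin k → ℝ) →ₗ[ℝ] ℝ)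
    (hl : ∀ y ∈ A, y ≠ x → l (fun i => (y i : ℝ)) < l (fun i => (x i : ℝ))) :
    ∀ t : ℕ, wdist A (t • x) = t ∧
      ∀ L : List (Fin k → ℤ), (∀ a ∈ L, a ∈ A) → L.length = t → L.sum = t • x →
        L = List.replicate t x := by
  -- define an additive hom f : (Fin k → ℤ) →+ ℝ
  set f : (Fin k → ℤ) →+ ℝ := AddMonoidHom.mk'
    (fun v => l (fun i => (v i : ℝ)))
    (by intro v w
        have : (fun i => ((v + w) i : ℝ)) = (fun i => (v i : ℝ)) + fun i => (w i : ℝ) := by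
          funext i; push_cast [Pi.add_apply]; ring
        simp only [this, map_add]) with hf
  set c : ℝ := f x with hc
  have hfa : ∀ a ∈ A, f a ≤ c := by
    intro a ha
    by_cases h : a = x
    · subst h; exact le_rfl
    · exact le_of_lt (hl a ha h)
  have hfa' : ∀ a ∈ A, a ≠ x → f a < c := fun a ha h => hl a ha h
  have hxne : x ≠ 0 := fun h => h0A (h ▸ hx)
  have hcpos : 0 < c := by
    have hnx : -x ≠ x := by
      intro h
      apply hxne
      funext i
      have := congrFun h i
      simp only [Pi.neg_apply] at this
      simp only [Pi.zero_apply]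
      omega
    have h2 : f (-x) < c := hl (-x) (hsym x hx) hnx
    rw [map_neg, ← hc] at h2
    linarith
  -- sum bound
  have key : ∀ L : List (Fin k → ℤ), (∀ a ∈ L, a ∈ A) →
      f L.sum ≤ L.length * c ∧ ((∃ a ∈ L, a ≠ x) → f L.sum < L.length * c) := by
    intro L
    induction L with
    | nil => intro _; simp
    | cons a L ih =>
      intro hmem
      have ha : a ∈ A := hmem a List.mem_cons_self
      have hL : ∀ b ∈ L, b ∈ A := fun b hb => hmem b (List.mem_cons_of_mem a hb)
      obtain ⟨ih1, ih2⟩ := ih hL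
      have hfa1 : f a ≤ c := hfa a ha
      constructor
      · simp only [List.sum_cons, map_add, List.length_cons]
        push_cast
        nlinarith
      · rintro ⟨b, hb, hbne⟩
        simp only [List.sum_cons, map_add, List.length_cons]
        push_cast
        rcases List.mem_cons.mp hb with rfl | hbL
        · have := hfa' b ha hbne
          nlinarith
        · have := ih2 ⟨b, hbL, hbne⟩
          nlinarith
  have hrep : ∀ t : ℕ, (List.replicate t x).sum = t • x := by
    intro t; simp [List.sum_replicate]
  intro t
  have hft : f (t • x) = t * c := by
    rw [map_nsmul]; simp [nsmul_eq_mul, hc]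
  have htS : t ∈ {n | ∃ L : List (Fin k → ℤ), L.length = n ∧ (∀ a ∈ L, a ∈ A) ∧ L.sum = t • x} := by
    exact ⟨List.replicate t x, List.length_replicate,
      fun a ha => (List.eq_of_mem_replicate ha) ▸ hx, hrep t⟩
  constructor
  · apply le_antisymm
    · exact Nat.sInf_le htS
    · apply le_csInf ⟨t, htS⟩
      rintro n ⟨L, hlen, hmem, hsum⟩
      by_contra hlt
      push_neg at hlt
      have h1 := (key L hmem).1
      rw [hsum, hft, hlen] at h1
      have : (n : ℝ) < t := by exact_mod_cast hlt
      nlinarith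
  · intro L hmem hlen hsum
    rw [List.eq_replicate_iff]
    refine ⟨hlen, ?_⟩
    by_contra h
    push_neg at h
    obtain ⟨b, hb, hbne⟩ := h
    have h2 := (key L hmem).2 ⟨b, hb, hbne⟩
    rw [hsum, hft, hlen] at h2
    linarith
end

section
/- Let A be a finite symmetric generating set of ℤ^k not containing 0 and suppose x ∈ A is not a vertex of Conv A. Then there exist a positive integer K and a representation Kx = Σ A_i y_i where all y_i ∈ A \ {x}, all A_i are non-negative integers, and 0 < Σ A_i ≤ K. Consequently either ρ(Kx) < K or there exist two distinct shortest representations of Kx. -/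
noncomputable def eR {k : ℕ} (v : Fin k → ℤ) : Fin k → ℝ := fun i => (v i : ℝ)
def eQ {k : ℕ} (v : Fin k → ℤ) : Fin k → ℚ := fun i => (v i : ℚ)

lemma eQ_inj {k : ℕ} : Function.Injective (eQ (k := k)) := by
  intro a b h
  funext i
  have := congrFun h i
  simp only [eQ] at this
  exact_mod_cast this

lemma eR_inj {k : ℕ} : Function.Injective (eR (k := k)) := by
  intro a b h
  funext i
  have := congrFun h i
  simp only [eR] at this
  exact_mod_cast this

/-- rationality of span membership -/
lemma span_rat {k : ℕ} (s : Finset (Fin k → ℤ)) (v : Fin k → ℤ)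
    (h : eR v ∈ Submodule.span ℝ (eR '' ↑s)) : eQ v ∈ Submodule.span ℚ (eQ '' ↑s) := by
  by_contra hq
  obtain ⟨φ, hφv, hφp⟩ := Submodule.exists_dual_map_eq_bot_of_notMem hq inferInstance
  set a : Fin k → ℚ := fun i => φ (Pi.single i 1) with ha
  have hφ_eq : ∀ q : Fin k → ℚ, φ q = ∑ i, q i * a i := by
    intro q
    conv_lhs => rw [← Finset.univ_sum_single q]
    rw [map_sum]
    congr 1
    funext i
    have : Pi.single i (q i) = q i • (Pi.single i (1 : ℚ) : Fin k → ℚ) := by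
      rw [← Pi.single_smul, smul_eq_mul, mul_one]
    rw [this, map_smul, smul_eq_mul]
  set ψ : (Fin k → ℝ) →ₗ[ℝ] ℝ :=
    { toFun := fun u => ∑ i, (a i : ℝ) * u i
      map_add' := by intro u w; simp [mul_add, Finset.sum_add_distrib]
      map_smul' := by
        intro c u
        simp [Finset.mul_sum]
        congr 1; funext i; ring } with hψ
  have key : ∀ b : Fin k → ℤ, ψ (eR b) = ((φ (eQ b) : ℚ) : ℝ) := by
    intro b
    rw [hφ_eq]
    push_cast
    simp only [hψ, eR, eQ, LinearMap.coe_mk, AddHom.coe_mk]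
    exact Finset.sum_congr rfl fun i _ => mul_comm _ _
  have hker : Submodule.span ℝ (eR '' ↑s) ≤ LinearMap.ker ψ := by
    rw [Submodule.span_le]
    rintro - ⟨b, hb, rfl⟩
    have hb' : φ (eQ b) = 0 := by
      have : φ (eQ b) ∈ Submodule.map φ (Submodule.span ℚ (eQ '' ↑s)) :=
        Submodule.mem_map_of_mem (Submodule.subset_span ⟨b, hb, rfl⟩)
      rw [hφp] at this
      simpa using this
    simp [LinearMap.mem_ker, key, hb']
  have := hker h
  rw [LinearMap.mem_ker, key] at this
  exact hφv (by exact_mod_cast this)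

/-- turn a finitely supported ℕ-weighting into a list -/
lemma list_of_weights {k : ℕ} (F : Finset (Fin k → ℤ)) (g : (Fin k → ℤ) → ℕ) :
    ∃ l : List (Fin k → ℤ), l.length = ∑ b ∈ F, g b ∧ (∀ a ∈ l, a ∈ F) ∧
      l.sum = ∑ b ∈ F, g b • b := by
  classical
  induction F using Finset.induction with
  | empty => exact ⟨[], by simp⟩
  | @insert a F' hnotmem ih =>
    obtain ⟨l, hlen, hmem, hsum⟩ := ih
    refine ⟨List.replicate (g a) a ++ l, ?_, ?_, ?_⟩
    · simp [hlen, Finset.sum_insert hnotmem]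
    · intro b hb
      rcases List.mem_append.1 hb with hb | hb
      · simp [List.eq_of_mem_replicate hb]
      · simp [hmem b hb]
    · simp [List.sum_replicate, hsum, Finset.sum_insert hnotmem]



theorem stmt9 {k : ℕ} (A : Set (Fin k → ℤ)) (hfin : A.Finite)
    (hsym : ∀ x ∈ A, -x ∈ A) (h0A : (0 : Fin k → ℤ) ∉ A)
    (hgen : AddSubgroup.closure A = ⊤) (x : Fin k → ℤ) (hx : x ∈ A)
    (hnv : ¬ IsHullVertex A x) :
    ∃ K : ℕ, 0 < K ∧
      -- a representation K·x = Σ A_i y_i with y_i ∈ A \ {x}, A_i ≥ 0, 0 < Σ A_i ≤ K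
      (∃ c : (Fin k → ℤ) →₀ ℕ, (↑c.support ⊆ A \ {x}) ∧
        (∑ y ∈ c.support, (c y : ℤ) • y) = (K : ℤ) • x ∧
        0 < ∑ y ∈ c.support, c y ∧ (∑ y ∈ c.support, c y) ≤ K) ∧
      -- consequently either ρ(Kx) < K or there are two distinct shortest representations
      (wdist A (K • x) < K ∨
        ∃ l₁ l₂ : List (Fin k → ℤ), l₁ ≠ l₂ ∧
          l₁.length = wdist A (K • x) ∧ l₂.length = wdist A (K • x) ∧
          (∀ a ∈ l₁, a ∈ A) ∧ (∀ a ∈ l₂, a ∈ A) ∧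
          l₁.sum = K • x ∧ l₂.sum = K • x) := by
  classical
  set B : Finset (Fin k → ℤ) := insert 0 (hfin.toFinset.erase x) with hB
  have hBsub : ∀ b ∈ B, b ≠ 0 → b ∈ A ∧ b ≠ x := by
    intro b hb hb0
    rw [hB, Finset.mem_insert] at hb
    rcases hb with rfl | hb
    · exact absurd rfl hb0
    · rw [Finset.mem_erase, Set.Finite.mem_toFinset] at hb
      exact ⟨hb.2, hb.1⟩
  -- Step A: x is in the real convex hull
  have hmem : eR x ∈ convexHull ℝ (eR '' ↑B) := by
    by_contra hout
    have hfinT : (eR '' (↑B : Set (Fin k → ℤ))).Finite := B.finite_toSet.image _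
    obtain ⟨f, u, hfu, hufx⟩ := geometric_hahn_banach_closed_point
      (convex_convexHull ℝ _) (hfinT.isClosed_convexHull ℝ) hout
    refine hnv ⟨f.toLinearMap, fun y hy hyx => ?_⟩
    have hyB : y ∈ B := by
      rw [hB, Finset.mem_insert, Finset.mem_erase, Set.Finite.mem_toFinset]
      exact Or.inr ⟨hyx, hy⟩
    have : eR y ∈ convexHull ℝ (eR '' ↑B) := subset_convexHull ℝ _ ⟨y, hyB, rfl⟩
    exact lt_trans (hfu _ this) hufx
  -- Step B: Caratheodory
  rw [convexHull_eq_union] at hmem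
  simp only [Set.mem_iUnion] at hmem
  obtain ⟨t, htsub, htai, hxt⟩ := hmem
  rw [Finset.convexHull_eq] at hxt
  obtain ⟨W, hW0, hW1, hWx⟩ := hxt
  rw [Finset.centerMass_eq_of_sum_1 _ _ hW1] at hWx
  simp only [id] at hWx
  -- the preimage finset s
  set s : Finset (Fin k → ℤ) := B.filter (fun b => eR b ∈ t) with hs
  have hsB : s ⊆ B := Finset.filter_subset _ _
  have himg : s.image eR = t := by
    apply Finset.Subset.antisymm
    · intro q hq
      simp only [hs, Finset.mem_image, Finset.mem_filter] at hq
      obtain ⟨b, ⟨-, hbt⟩, rfl⟩ := hq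
      exact hbt
    · intro q hq
      obtain ⟨b, hbB, rfl⟩ := htsub hq
      exact Finset.mem_image_of_mem _ (Finset.mem_filter.2 ⟨hbB, hq⟩)
  have hinj : ∀ a ∈ s, ∀ b ∈ s, eR a = eR b → a = b := fun a _ b _ h => eR_inj h
  have hsum1 : ∑ b ∈ s, W (eR b) = 1 := by
    rw [← hW1, ← himg, Finset.sum_image hinj]
  have hsumx : ∑ b ∈ s, W (eR b) • eR b = eR x := by
    rw [← hWx, ← himg, Finset.sum_image hinj]
  have hsne : s.Nonempty := by
    rw [← Finset.image_nonempty (f := eR), himg]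
    apply Finset.nonempty_of_ne_empty
    rintro rfl
    simp at hW1
  obtain ⟨b₀, hb₀s⟩ := hsne
  -- Step C: span membership over ℝ, then ℚ
  have heRsub : ∀ b c : Fin k → ℤ, eR (b - c) = eR b - eR c := by
    intro b c; funext i; simp [eR]
  have heQsub : ∀ b c : Fin k → ℤ, eQ (b - c) = eQ b - eQ c := by
    intro b c; funext i; simp [eQ]
  set s' : Finset (Fin k → ℤ) := s.image (fun b => b - b₀) with hs'
  have hspanR : eR (x - b₀) ∈ Submodule.span ℝ (eR '' ↑s') := by
    have hrepr : eR (x - b₀) = ∑ b ∈ s, W (eR b) • eR (b - b₀) := by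
      simp only [heRsub, smul_sub, Finset.sum_sub_distrib, hsumx, ← Finset.sum_smul, hsum1,
        one_smul]
    rw [hrepr]
    refine Submodule.sum_mem _ fun b hb => Submodule.smul_mem _ _ ?_
    exact Submodule.subset_span ⟨b - b₀, by
      simp only [hs', Finset.coe_image, Set.mem_image, Finset.mem_coe]
      exact ⟨b, hb, rfl⟩, rfl⟩
  have hspanQ := span_rat s' (x - b₀) hspanR
  rw [← Finset.coe_image] at hspanQ
  obtain ⟨f, -, hf⟩ := Submodule.mem_span_finset.1 hspanQ
  -- reindex coefficients to s
  have himg2 : s'.image eQ = s.image (fun b => eQ (b - b₀)) := by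
    rw [hs', Finset.image_image]
    rfl
  have hinj2 : ∀ a ∈ s, ∀ b ∈ s, eQ (a - b₀) = eQ (b - b₀) → a = b := by
    intro a _ b _ h
    have := eQ_inj h
    exact sub_left_injective this
  set d : (Fin k → ℤ) → ℚ := fun b => f (eQ b - eQ b₀) with hdd
  have hd : ∑ b ∈ s, d b • (eQ b - eQ b₀) = eQ x - eQ b₀ := by
    have := hf
    rw [himg2, Finset.sum_image hinj2] at this
    simp only [heQsub] at this
    exact this
  -- build rational weights
  set wq : (Fin k → ℤ) → ℚ :=
    fun b => if b = b₀ then 1 - ∑ b' ∈ s.erase b₀, d b' else d b with hwq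
  have herase_d : ∀ b ∈ s.erase b₀, wq b = d b := by
    intro b hb
    rw [hwq]
    exact if_neg (Finset.mem_erase.1 hb).1
  have hwq1 : ∑ b ∈ s, wq b = 1 := by
    rw [← Finset.sum_erase_add s _ hb₀s, Finset.sum_congr rfl herase_d]
    simp [hwq]
  have hd' : ∑ b ∈ s.erase b₀, d b • (eQ b - eQ b₀) = eQ x - eQ b₀ := by
    rw [← hd, ← Finset.sum_erase_add s _ hb₀s]
    simp
  have hwqx : ∑ b ∈ s, wq b • eQ b = eQ x := by
    rw [← Finset.sum_erase_add s _ hb₀s, Finset.sum_congr rfl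
      (fun b hb => by rw [herase_d b hb])]
    have hxq : eQ x = (∑ b ∈ s.erase b₀, d b • eQ b) - (∑ b ∈ s.erase b₀, d b) • eQ b₀
        + eQ b₀ := by
      rw [Finset.sum_smul, ← Finset.sum_sub_distrib]
      simp only [← smul_sub, hd']
      abel
    have hwqb0 : wq b₀ = 1 - ∑ b' ∈ s.erase b₀, d b' := by
      rw [hwq]
      simp
    rw [hxq, hwqb0, sub_smul, one_smul]
    abel
  -- nonnegativity via affine independence
  have hembed : AffineIndependent ℝ (fun b : ↥s => eR b.1) := by
    have hmemt : ∀ b : ↥s, eR b.1 ∈ t := fun b => by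
      rw [← himg]; exact Finset.mem_image_of_mem eR b.2
    have hcomp : (fun b : ↥s => eR b.1) =
        (Subtype.val : ↥t → (Fin k → ℝ)) ∘ (fun b : ↥s => (⟨eR b.1, hmemt b⟩ : ↥t)) := rfl
    rw [hcomp]
    exact htai.comp_embedding
      ⟨_, fun a b h => Subtype.ext (eR_inj (congrArg Subtype.val h))⟩
  have hsum1' : ∑ b : ↥s, W (eR b.1) = 1 := by
    rw [Finset.sum_coe_sort s (fun b => W (eR b))]; exact hsum1
  have hsum2' : ∑ b : ↥s, ((wq b.1 : ℚ) : ℝ) = 1 := by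
    rw [Finset.sum_coe_sort s (fun b => ((wq b : ℚ) : ℝ))]
    rw [← Rat.cast_sum]
    exact_mod_cast congrArg (fun q : ℚ => (q : ℝ)) hwq1
  have hwqxR : ∑ b ∈ s, ((wq b : ℚ) : ℝ) • eR b = eR x := by
    funext i
    have h := congrFun hwqx i
    simp only [Finset.sum_apply, Pi.smul_apply, smul_eq_mul, eQ] at h
    have h2 := congrArg (fun q : ℚ => (q : ℝ)) h
    push_cast at h2
    simp only [Finset.sum_apply, Pi.smul_apply, smul_eq_mul, eR]
    exact h2
  have hcomb : Finset.univ.affineCombination ℝ (fun b : ↥s => eR b.1)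
        (fun b : ↥s => W (eR b.1)) =
      Finset.univ.affineCombination ℝ (fun b : ↥s => eR b.1)
        (fun b : ↥s => ((wq b.1 : ℚ) : ℝ)) := by
    rw [Finset.affineCombination_eq_linear_combination _ _ _ hsum1',
      Finset.affineCombination_eq_linear_combination _ _ _ hsum2']
    rw [Finset.sum_coe_sort s (fun b => W (eR b) • eR b),
      Finset.sum_coe_sort s (fun b => ((wq b : ℚ) : ℝ) • eR b)]
    rw [hsumx, hwqxR]
  have hind := (affineIndependent_iff_indicator_eq_of_affineCombination_eq ℝ
    (fun b : ↥s => eR b.1)).1 hembed Finset.univ Finset.univ _ _ hsum1' hsum2' hcomb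
  simp only [Finset.coe_univ, Set.indicator_univ] at hind
  have hwqnn : ∀ b ∈ s, 0 ≤ wq b := by
    intro b hb
    have h1 : W (eR b) = ((wq b : ℚ) : ℝ) := congrFun hind ⟨b, hb⟩
    have h2 : (0 : ℝ) ≤ ((wq b : ℚ) : ℝ) := h1 ▸ hW0 _ (by rw [← himg]; exact Finset.mem_image_of_mem _ hb)
    exact_mod_cast h2
  -- clear denominators
  set N : ℕ := ∏ b ∈ s, (wq b).den with hN
  have hNpos : 0 < N := Finset.prod_pos fun b _ => (wq b).pos
  set m : (Fin k → ℤ) → ℕ := fun b => ((wq b).num * ((N / (wq b).den : ℕ) : ℤ)).toNat with hm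
  have hmcast : ∀ b ∈ s, ((m b : ℚ)) = wq b * N := by
    intro b hb
    have hdvd : (wq b).den ∣ N := Finset.dvd_prod_of_mem _ hb
    have hden : ((wq b).den : ℚ) ≠ 0 := by
      exact_mod_cast (wq b).pos.ne'
    have hc : ((wq b).den : ℚ) * ((N / (wq b).den : ℕ) : ℚ) = (N : ℚ) := by
      exact_mod_cast congrArg (fun n : ℕ => (n : ℚ)) (Nat.mul_div_cancel' hdvd)
    have hnum : ((wq b).num : ℚ) = wq b * (wq b).den := by
      have h := Rat.num_div_den (wq b)
      rw [div_eq_iff hden] at h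
      exact h
    have hz : (((wq b).num * ((N / (wq b).den : ℕ) : ℤ) : ℤ) : ℚ) = wq b * N := by
      rw [Int.cast_mul, Int.cast_natCast, hnum, mul_assoc, hc]
    have hznn : (0 : ℤ) ≤ (wq b).num * ((N / (wq b).den : ℕ) : ℤ) := by
      have : (0:ℚ) ≤ wq b * N := mul_nonneg (hwqnn b hb) (by positivity)
      rw [← hz] at this
      exact_mod_cast this
    rw [hm]
    simp only [Int.toNat_of_nonneg hznn] at *
    rw [← hz]
    exact_mod_cast congrArg (fun z : ℤ => (z : ℚ)) (Int.toNat_of_nonneg hznn)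
  set SE : Finset (Fin k → ℤ) := s.erase 0 with hSE
  -- sum over s equals sum over SE (0 contributes trivially)
  have herase0 : ∀ (g : (Fin k → ℤ) → ℚ), (∀ i : Fin k, g 0 * ((0:ℚ)) = 0) →
      True := fun _ _ => trivial
  have hQcomp : ∀ i : Fin k, ∑ b ∈ SE, wq b * (b i : ℚ) = (x i : ℚ) := by
    intro i
    have h := congrFun hwqx i
    simp only [Finset.sum_apply, Pi.smul_apply, smul_eq_mul, eQ] at h
    rw [← h]
    by_cases h0 : (0 : Fin k → ℤ) ∈ s
    · rw [← Finset.sum_erase_add s _ h0]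
      simp [hSE]
    · rw [hSE, Finset.erase_eq_of_notMem h0]
  have hQsumle : ∑ b ∈ SE, wq b ≤ 1 := by
    rw [← hwq1]
    exact Finset.sum_le_sum_of_subset_of_nonneg (Finset.erase_subset _ _)
      (fun b hb _ => hwqnn b hb)
  have hSEsub : ∀ b ∈ SE, b ∈ s ∧ b ≠ 0 := fun b hb =>
    ⟨(Finset.mem_erase.1 hb).2, (Finset.mem_erase.1 hb).1⟩
  -- the integer equation
  have hZeq : ∑ b ∈ SE, (m b : ℤ) • b = (N : ℤ) • x := by
    funext i
    have : ((∑ b ∈ SE, (m b : ℤ) * b i : ℤ) : ℚ) = (((N : ℤ) * x i : ℤ) : ℚ) := by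
      push_cast
      have hstep : ∑ b ∈ SE, (m b : ℚ) * (b i : ℚ) = ∑ b ∈ SE, wq b * (N : ℚ) * (b i : ℚ) :=
        Finset.sum_congr rfl fun b hb => by rw [hmcast b (hSEsub b hb).1]
      rw [hstep]
      have : ∑ b ∈ SE, wq b * (N:ℚ) * (b i : ℚ) = (N:ℚ) * ∑ b ∈ SE, wq b * (b i : ℚ) := by
        rw [Finset.mul_sum]
        exact Finset.sum_congr rfl fun b _ => by ring
      rw [this, hQcomp i]
    have h2 : (∑ b ∈ SE, (m b : ℤ) * b i : ℤ) = ((N : ℤ) * x i : ℤ) := by exact_mod_cast this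
    simpa [Finset.sum_apply, Pi.smul_apply, smul_eq_mul] using h2
  -- bound on the sum of coefficients
  have hmle : ∑ b ∈ SE, m b ≤ N := by
    have : ((∑ b ∈ SE, m b : ℕ) : ℚ) ≤ (N : ℚ) := by
      push_cast
      rw [Finset.sum_congr rfl (fun b hb => hmcast b (hSEsub b hb).1)]
      calc ∑ b ∈ SE, wq b * (N:ℚ) = (∑ b ∈ SE, wq b) * N := by rw [Finset.sum_mul]
        _ ≤ 1 * N := by
            apply mul_le_mul_of_nonneg_right hQsumle (by positivity)
        _ = N := one_mul _
    exact_mod_cast this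
  -- positivity
  have hmpos : 0 < ∑ b ∈ SE, m b := by
    rcases Nat.eq_zero_or_pos (∑ b ∈ SE, m b) with hzero | hpos
    · exfalso
      have hall : ∀ b ∈ SE, m b = 0 := by
        intro b hb
        exact (Finset.sum_eq_zero_iff.1 hzero) b hb
      have : (0 : Fin k → ℤ) = (N : ℤ) • x := by
        rw [← hZeq]
        exact (Finset.sum_eq_zero fun b hb => by rw [hall b hb]; simp).symm
      have hx0 : x = 0 := by
        have hN0 : (N : ℤ) ≠ 0 := by exact_mod_cast hNpos.ne'
        rcases smul_eq_zero.1 this.symm with h | h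
        · exact absurd h hN0
        · exact h
      rw [hx0] at hx
      exact h0A hx
    · exact hpos
  -- build the Finsupp
  set cF : (Fin k → ℤ) →₀ ℕ := Finsupp.onFinset SE (fun b => if b ∈ SE then m b else 0)
    (fun b hb => by by_contra h; simp [h] at hb) with hcF
  have hsupp : cF.support ⊆ SE := Finsupp.support_onFinset_subset
  have hcFval : ∀ b ∈ SE, cF b = m b := fun b hb => by simp [hcF, hb]
  have hsuppA : ↑cF.support ⊆ A \ {x} := by
    intro b hb
    rw [Finset.mem_coe] at hb
    have hbSE := hsupp hb
    obtain ⟨hbs, hb0⟩ := hSEsub b hbSE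
    obtain ⟨hbA, hbx⟩ := hBsub b (hsB hbs) hb0
    exact ⟨hbA, hbx⟩
  have hsum_ext : ∀ (M : Type) (_ : AddCommMonoid M) (g : (Fin k → ℤ) → ℕ → M),
      True := fun _ _ _ => trivial
  have hcsum1 : ∑ y ∈ cF.support, (cF y : ℤ) • y = ∑ b ∈ SE, (m b : ℤ) • b := by
    rw [Finset.sum_subset hsupp (fun y hy hyn => by
      rw [Finsupp.notMem_support_iff.1 hyn]; simp)]
    exact Finset.sum_congr rfl fun b hb => by rw [hcFval b hb]
  have hcsum2 : ∑ y ∈ cF.support, cF y = ∑ b ∈ SE, m b := by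
    rw [Finset.sum_subset hsupp (fun y hy hyn => Finsupp.notMem_support_iff.1 hyn)]
    exact Finset.sum_congr rfl fun b hb => hcFval b hb
  -- final assembly
  refine ⟨N, hNpos, ⟨cF, hsuppA, by rw [hcsum1, hZeq], by rw [hcsum2]; exact hmpos,
    by rw [hcsum2]; exact hmle⟩, ?_⟩
  -- the word metric consequence
  have hl1 : (List.replicate N x).length = N ∧ (∀ a ∈ List.replicate N x, a ∈ A) ∧
      (List.replicate N x).sum = N • x := by
    refine ⟨List.length_replicate, fun a ha => ?_, List.sum_replicate _ _⟩
    rw [List.eq_of_mem_replicate ha]; exact hx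
  have hND : N ∈ {n | ∃ l : List (Fin k → ℤ), l.length = n ∧ (∀ a ∈ l, a ∈ A) ∧
      l.sum = N • x} := ⟨List.replicate N x, hl1⟩
  have hwdle : wdist A (N • x) ≤ N := Nat.sInf_le hND
  obtain ⟨l₂, hlen₂, hmem₂, hsum₂⟩ := list_of_weights SE m
  have hsum₂' : l₂.sum = N • x := by
    rw [hsum₂]
    have : ∑ b ∈ SE, m b • b = ∑ b ∈ SE, (m b : ℤ) • b :=
      Finset.sum_congr rfl fun b _ => (natCast_zsmul b (m b)).symm
    rw [this, hZeq, natCast_zsmul]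
  have hmem₂' : ∀ a ∈ l₂, a ∈ A := fun a ha =>
    (hBsub a (hsB (hSEsub a (hmem₂ a ha)).1) (hSEsub a (hmem₂ a ha)).2).1
  have hMD : (∑ b ∈ SE, m b) ∈ {n | ∃ l : List (Fin k → ℤ), l.length = n ∧
      (∀ a ∈ l, a ∈ A) ∧ l.sum = N • x} := ⟨l₂, hlen₂, hmem₂', hsum₂'⟩
  by_cases hlt : wdist A (N • x) < N
  · exact Or.inl hlt
  · right
    have hwdeq : wdist A (N • x) = N := le_antisymm hwdle (not_lt.1 hlt)
    have hMeq : ∑ b ∈ SE, m b = N :=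
      le_antisymm hmle (by rw [← hwdeq]; exact Nat.sInf_le hMD)
    refine ⟨List.replicate N x, l₂, ?_, by rw [hl1.1, hwdeq], by rw [hlen₂, hMeq, hwdeq],
      hl1.2.1, hmem₂', hl1.2.2, hsum₂'⟩
    intro heq
    have hxl2 : x ∈ l₂ := by
      rw [← heq]
      exact List.mem_replicate.2 ⟨hNpos.ne', rfl⟩
    have := hSEsub x (hmem₂ x hxl2)
    exact (hBsub x (hsB this.1) this.2).2 rfl
end

section
/- Let A be a finite symmetric generating set of ℤ^k not containing 0. For every x ∈ A there exists a positive integer K_x such that K_x·x can be written as a sum of at most K_x primary elements of A (with repetitions allowed), where primary elements are the vertices of Conv A. -/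
lemma aux_mem_hull {k : ℕ} (A : Set (Fin k → ℤ)) (hfin : A.Finite) {x : Fin k → ℤ}
    (hx : x ∈ A) :
    (fun i => (x i : ℝ)) ∈
      convexHull ℝ ((fun (a : Fin k → ℤ) => fun i => ((a i : ℤ) : ℝ)) ''
        {a | a ∈ A ∧ IsHullVertex A a}) := by
  classical
  set f : (Fin k → ℤ) → (Fin k → ℝ) := fun a i => (a i : ℝ) with hf
  have hfinj : Function.Injective f := by
    intro a b h
    funext i
    have := congrFun h i
    simpa [hf] using this
  set S : Set (Fin k → ℝ) := f '' A with hS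
  have hSfin : S.Finite := hfin.image f
  have hKM := closure_convexHull_extremePoints (hSfin.isCompact_convexHull ℝ)
    (convex_convexHull ℝ S)
  have hEsub : (convexHull ℝ S).extremePoints ℝ ⊆ S := extremePoints_convexHull_subset
  have hEfin : ((convexHull ℝ S).extremePoints ℝ).Finite := hSfin.subset hEsub
  rw [(hEfin.isClosed_convexHull ℝ).closure_eq] at hKM
  have key : (convexHull ℝ S).extremePoints ℝ ⊆ f '' {a | a ∈ A ∧ IsHullVertex A a} := by
    intro e he
    obtain ⟨a, haA, rfl⟩ := hEsub he
    refine ⟨a, ⟨haA, ?_⟩, rfl⟩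
    have h1 : f a ∉ convexHull ℝ (S \ {f a}) := by
      have h2 := ((convex_convexHull ℝ S).mem_extremePoints_iff_mem_diff_convexHull_diff).1 he
      intro hmem
      exact h2.2 (convexHull_mono (Set.diff_subset_diff_left (subset_convexHull ℝ S)) hmem)
    obtain ⟨l, u, hlu, hue⟩ := geometric_hahn_banach_closed_point
      (convex_convexHull ℝ _) ((hSfin.diff (t := {f a})).isClosed_convexHull ℝ) h1
    refine ⟨(l : (Fin k → ℝ) →L[ℝ] ℝ).toLinearMap, fun y hy hne => ?_⟩
    have hmem : f y ∈ convexHull ℝ (S \ {f a}) :=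
      subset_convexHull ℝ _ ⟨⟨y, hy, rfl⟩, fun h => hne (hfinj h)⟩
    exact (hlu _ hmem).trans hue
  have hx1 : f x ∈ convexHull ℝ S := subset_convexHull ℝ S ⟨x, hx, rfl⟩
  rw [← hKM] at hx1
  exact convexHull_mono key hx1

lemma aux_list {M : Type*} [AddCommMonoid M] {ι : Type*} (s : Finset ι)
    (n : ι → ℕ) (a : ι → M) :
    ∃ l : List M, (∀ v ∈ l, ∃ i ∈ s, v = a i) ∧ l.length = ∑ i ∈ s, n i ∧
      l.sum = ∑ i ∈ s, n i • a i := by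
  classical
  induction s using Finset.induction with
  | empty => exact ⟨[], by simp, by simp, by simp⟩
  | @insert j s' hnot ih =>
    obtain ⟨l, h1, h2, h3⟩ := ih
    refine ⟨List.replicate (n j) (a j) ++ l, ?_, ?_, ?_⟩
    · intro v hv
      rcases List.mem_append.1 hv with hv | hv
      · exact ⟨j, Finset.mem_insert_self _ _, (List.eq_of_mem_replicate hv)⟩
      · obtain ⟨i, hi, hvi⟩ := h1 v hv
        exact ⟨i, Finset.mem_insert_of_mem hi, hvi⟩
    · simp [h2, Finset.sum_insert hnot]
    · simp [h3, Finset.sum_insert hnot]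

lemma aux_rat_core {k : ℕ} (x : Fin k → ℤ) {ι : Type} [Fintype ι]
    (a : ι → Fin k → ℤ) (w : ι → ℝ)
    (hai : AffineIndependent ℝ (fun i => fun t => ((a i t : ℤ) : ℝ)))
    (hw0 : ∀ i, 0 < w i) (hw1 : ∑ i, w i = 1)
    (hR1 : ∀ t, (x t : ℝ) = ∑ i, w i * ((a i t : ℤ) : ℝ)) :
    ∃ K : ℕ, 0 < K ∧ ∃ n : ι → ℕ, (∑ i, n i) = K ∧ (∑ i, n i • a i) = K • x := by
  classical
  set g : ι → (Fin (k + 1) → ℚ) := fun i => Fin.snoc (fun t => (a i t : ℚ)) 1 with hg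
  set b : Fin (k + 1) → ℚ := Fin.snoc (fun t => (x t : ℚ)) 1 with hb
  have hbmem : b ∈ Submodule.span ℚ (Set.range g) := by
    by_contra hbn
    set W := Submodule.span ℚ (Set.range g) with hW
    have hqb : W.mkQ b ≠ 0 := by
      simpa [Submodule.mkQ_apply, Submodule.Quotient.mk_eq_zero] using hbn
    have hne : ¬ ∀ φ : Module.Dual ℚ ((Fin (k + 1) → ℚ) ⧸ W), φ (W.mkQ b) = 0 := by
      rw [Module.forall_dual_apply_eq_zero_iff]
      exact hqb
    push_neg at hne
    obtain ⟨φ₀, hφ₀⟩ := hne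
    set φ : (Fin (k + 1) → ℚ) →ₗ[ℚ] ℚ := φ₀.comp W.mkQ with hφdef
    have hφg : ∀ i, φ (g i) = 0 := by
      intro i
      have : g i ∈ W := Submodule.subset_span (Set.mem_range_self i)
      simp [hφdef, (Submodule.Quotient.mk_eq_zero W).2 this]
    have hφb : φ b ≠ 0 := hφ₀
    set c : Fin (k + 1) → ℚ := fun j => φ (fun j' => if j = j' then 1 else 0) with hc
    have hφ : ∀ y : Fin (k + 1) → ℚ, φ y = ∑ j, y j * c j := by
      intro y
      rw [LinearMap.pi_apply_eq_sum_univ φ y]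
      exact Finset.sum_congr rfl fun j _ => by rw [smul_eq_mul, hc]
    have hφg' : ∀ i, ∑ t : Fin k, (a i t : ℚ) * c t.castSucc + c (Fin.last k) = 0 := by
      intro i
      have h := (hφg i).symm
      rw [hφ (g i), Fin.sum_univ_castSucc] at h
      simpa [hg, Fin.snoc_castSucc, Fin.snoc_last] using h.symm
    have hφb' : ∑ t : Fin k, (x t : ℚ) * c t.castSucc + c (Fin.last k) ≠ 0 := by
      intro hcon
      apply hφb
      rw [hφ b, Fin.sum_univ_castSucc]
      simpa [hb, Fin.snoc_castSucc, Fin.snoc_last] using hcon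
    have hLne : (((∑ t : Fin k, (x t : ℚ) * c t.castSucc + c (Fin.last k) : ℚ)) : ℝ) ≠ 0 := by
      exact_mod_cast hφb'
    apply hLne
    push_cast
    calc ∑ t : Fin k, (x t : ℝ) * ((c t.castSucc : ℚ) : ℝ) + ((c (Fin.last k) : ℚ) : ℝ)
        = ∑ t : Fin k, (∑ i, w i * ((a i t : ℤ) : ℝ)) * ((c t.castSucc : ℚ) : ℝ)
          + (∑ i, w i) * ((c (Fin.last k) : ℚ) : ℝ) := by
          rw [hw1, one_mul]
          exact congrArg₂ (· + ·) (Finset.sum_congr rfl fun t _ => by rw [hR1]) rfl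
      _ = ∑ i, w i * ((∑ t : Fin k, ((a i t : ℤ) : ℝ) * ((c t.castSucc : ℚ) : ℝ))
            + ((c (Fin.last k) : ℚ) : ℝ)) := by
          simp only [Finset.sum_mul]
          rw [Finset.sum_comm, ← Finset.sum_add_distrib]
          exact Finset.sum_congr rfl fun i _ => by
            rw [mul_add, Finset.mul_sum]
            exact congrArg₂ (· + ·) (Finset.sum_congr rfl fun t _ => by ring) rfl
      _ = ∑ i, w i * ((((∑ t : Fin k, (a i t : ℚ) * c t.castSucc + c (Fin.last k)) : ℚ)) : ℝ) := by
          exact Finset.sum_congr rfl fun i _ => by push_cast; ring_nf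
      _ = 0 := by
          simp only [hφg']
          simp
  obtain ⟨q, hq⟩ := (Submodule.mem_span_range_iff_exists_fun ℚ).1 hbmem
  have hQ1 : ∀ t, ∑ i, q i * (a i t : ℚ) = (x t : ℚ) := by
    intro t
    have h := congrFun hq t.castSucc
    simpa [Finset.sum_apply, Pi.smul_apply, smul_eq_mul, hg, hb, Fin.snoc_castSucc] using h
  have hQ2 : ∑ i, q i = 1 := by
    have h := congrFun hq (Fin.last k)
    simpa [Finset.sum_apply, Pi.smul_apply, smul_eq_mul, hg, hb, Fin.snoc_last] using h
  have hqw : ∀ i, ((q i : ℚ) : ℝ) = w i := by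
    have key := hai.eq_of_sum_eq_sum (s := Finset.univ)
      (w₁ := fun i => ((q i : ℚ) : ℝ)) (w₂ := w) ?_ ?_
    · exact fun i => key i (Finset.mem_univ i)
    · rw [hw1]
      exact_mod_cast congrArg (fun r : ℚ => (r : ℝ)) hQ2
    · funext t
      simp only [Finset.sum_apply, Pi.smul_apply, smul_eq_mul]
      have h1 : ∑ i, ((q i : ℚ) : ℝ) * ((a i t : ℤ) : ℝ) = ((x t : ℚ) : ℝ) := by
        rw [← hQ1 t]
        push_cast
        rfl
      rw [h1, ← hR1 t]
      push_cast
      rfl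
  have hq0 : ∀ i, 0 < q i := by
    intro i
    have h : (0 : ℝ) < ((q i : ℚ) : ℝ) := by rw [hqw i]; exact hw0 i
    exact_mod_cast h
  set K : ℕ := ∏ i, (q i).den with hK
  have hK0 : 0 < K := Finset.prod_pos fun i _ => (q i).pos
  set n : ι → ℕ := fun i => (q i).num.toNat * ∏ j ∈ Finset.univ.erase i, (q j).den with hn
  have hqK : ∀ i, ((n i : ℕ) : ℚ) = q i * K := by
    intro i
    have hnum : (((q i).num.toNat : ℕ) : ℚ) = ((q i).num : ℚ) := by
      exact_mod_cast congrArg (Int.cast : ℤ → ℚ) (Int.toNat_of_nonneg (Rat.num_nonneg.2 (hq0 i).le))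
    have hKsplit : ((K : ℕ) : ℚ) = ((q i).den : ℚ) * ∏ j ∈ Finset.univ.erase i, ((q j).den : ℚ) := by
      rw [hK]
      push_cast
      exact (Finset.mul_prod_erase Finset.univ (fun j => (((q j).den : ℕ) : ℚ))
        (Finset.mem_univ i)).symm
    rw [hn]
    push_cast [hKsplit, hnum]
    rw [← mul_assoc, Rat.mul_den_eq_num]
  have hsumn : (∑ i, n i) = K := by
    have h : ((∑ i, n i : ℕ) : ℚ) = ((K : ℕ) : ℚ) := by
      push_cast
      calc ∑ i, ((n i : ℕ) : ℚ) = ∑ i, q i * K := Finset.sum_congr rfl fun i _ => hqK i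
        _ = (∑ i, q i) * K := (Finset.sum_mul _ _ _).symm
        _ = K := by rw [hQ2, one_mul]
    exact_mod_cast h
  refine ⟨K, hK0, n, hsumn, ?_⟩
  funext t
  have h : ∑ i, ((n i : ℕ) : ℚ) * ((a i t : ℤ) : ℚ) = ((K : ℕ) : ℚ) * ((x t : ℤ) : ℚ) := by
    calc ∑ i, ((n i : ℕ) : ℚ) * ((a i t : ℤ) : ℚ)
        = ∑ i, (q i * K) * (a i t : ℚ) := Finset.sum_congr rfl fun i _ => by rw [hqK i]
      _ = K * ∑ i, q i * (a i t : ℚ) := by rw [Finset.mul_sum]; exact Finset.sum_congr rfl fun i _ => by ring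
      _ = K * (x t : ℚ) := by rw [hQ1 t]
  have goal2 : ∑ i, ((n i : ℕ) : ℤ) * a i t = ((K : ℕ) : ℤ) * x t := by exact_mod_cast h
  simpa [Finset.sum_apply, Pi.smul_apply, nsmul_eq_mul] using goal2

lemma aux_rat {k : ℕ} (x : Fin k → ℤ) (E : Set (Fin k → ℤ))
    (hx : (fun i => (x i : ℝ)) ∈
      convexHull ℝ ((fun (a : Fin k → ℤ) => fun i => ((a i : ℤ) : ℝ)) '' E)) :
    ∃ K : ℕ, 0 < K ∧ ∃ l : List (Fin k → ℤ),
      (∀ a ∈ l, a ∈ E) ∧ l.length = K ∧ l.sum = K • x := by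
  classical
  obtain ⟨ι, hfι, z, w, hz, hai, hw0, hw1, hwz⟩ := eq_pos_convex_span_of_mem_convexHull hx
  choose a haE hfa using fun i => hz (Set.mem_range_self i)
  have hza : z = fun i => fun t => ((a i t : ℤ) : ℝ) := by
    funext i
    exact (hfa i).symm
  rw [hza] at hai hwz
  have hR1 : ∀ t, (x t : ℝ) = ∑ i, w i * ((a i t : ℤ) : ℝ) := by
    intro t
    have h := congrFun hwz t
    simp only [Finset.sum_apply, Pi.smul_apply, smul_eq_mul] at h
    exact h.symm
  obtain ⟨K, hK0, n, hsum, hvec⟩ := aux_rat_core x a w hai hw0 hw1 hR1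
  obtain ⟨l, hl1, hl2, hl3⟩ := aux_list Finset.univ n a
  refine ⟨K, hK0, l, ?_, by rw [hl2, hsum], by rw [hl3, hvec]⟩
  intro v hv
  obtain ⟨i, _, rfl⟩ := hl1 v hv
  exact haE i

theorem stmt10 {k : ℕ} (A : Set (Fin k → ℤ)) (hfin : A.Finite)
    (hsym : ∀ x ∈ A, -x ∈ A) (h0A : (0 : Fin k → ℤ) ∉ A)
    (hgen : AddSubgroup.closure A = ⊤) :
    ∀ x ∈ A, ∃ K : ℕ, 0 < K ∧
      ∃ l : List (Fin k → ℤ),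
        (∀ a ∈ l, a ∈ A ∧ IsHullVertex A a) ∧
        l.length ≤ K ∧ l.sum = K • x := by
  intro x hx
  obtain ⟨K, hK0, l, hl1, hl2, hl3⟩ := aux_rat x {a | a ∈ A ∧ IsHullVertex A a}
    (aux_mem_hull A hfin hx)
  exact ⟨K, hK0, l, fun a ha => hl1 a ha, hl2.le, hl3⟩
end

section
/- Let A be a finite symmetric generating set of ℤ^k not containing 0. There exists an integer Δ such that for every v ∈ ℤ^k there is a shortest representation of v as a sum of ρ(v) elements of A containing at most Δ summands that are not primary elements of A. -/
namespace Stmt14Aux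

noncomputable section
open Finset

/-- coercion of a rational vector to a real vector -/
def cQ {ι : Type} (v : ι → ℚ) : ι → ℝ := fun i => (v i : ℝ)

lemma cQ_inj {ι : Type} : Function.Injective (cQ (ι := ι)) := by
  intro a b h
  funext i
  have := congrFun h i
  simpa [cQ] using this

lemma cQ_smul_sum {m : ℕ} {ι : Type} (T : Finset ι) (q : ι → ℚ) (p : ι → (Fin m → ℚ)) :
    cQ (∑ i ∈ T, q i • p i) = ∑ i ∈ T, (q i : ℝ) • cQ (p i) := by
  funext j
  simp only [cQ, Finset.sum_apply, Pi.smul_apply, smul_eq_mul]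
  push_cast
  rfl

/-- realification of a ℚ-linear map -/
def realify {m : ℕ} {ι : Type} (φ : (Fin m → ℚ) →ₗ[ℚ] (ι → ℚ)) :
    (Fin m → ℝ) →ₗ[ℝ] (ι → ℝ) :=
  Matrix.mulVecLin ((LinearMap.toMatrix' φ).map (fun q : ℚ => (q : ℝ)))

lemma realify_apply {m : ℕ} {ι : Type} (φ : (Fin m → ℚ) →ₗ[ℚ] (ι → ℚ)) (v : Fin m → ℚ) :
    realify φ (cQ v) = cQ (φ v) := by
  have h : φ v = (LinearMap.toMatrix' φ).mulVec v := by
    rw [← Matrix.toLin'_apply, Matrix.toLin'_toMatrix']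
  funext j
  simp only [realify, cQ, Matrix.mulVecLin_apply, Matrix.mulVec, dotProduct,
    Matrix.map_apply, h, dotProduct]
  push_cast
  rfl

/-- rational vectors linearly independent over ℚ are linearly independent over ℝ -/
lemma indep_real {m : ℕ} {ι : Type} [Fintype ι] [DecidableEq ι] {g : ι → (Fin m → ℚ)}
    (hg : LinearIndependent ℚ g) :
    LinearIndependent ℝ (fun i => cQ (g i)) := by
  have hker : LinearMap.ker ((Fintype.linearCombination ℚ) g) = ⊥ := by
    rw [LinearMap.ker_eq_bot']
    intro c hc
    rw [Fintype.linearCombination_apply] at hc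
    funext i
    exact Fintype.linearIndependent_iff.mp hg c hc i
  obtain ⟨ψ, hψ⟩ := LinearMap.exists_leftInverse_of_injective _ hker
  have h1 : ∀ i, ψ (g i) = Pi.single i 1 := by
    intro i
    have h2 : (Fintype.linearCombination ℚ) g (Pi.single i 1) = g i := by
      rw [Fintype.linearCombination_apply]
      simp [Pi.single_apply]
    have h3 := LinearMap.congr_fun hψ (Pi.single i 1)
    simpa [h2] using h3
  have h2 : LinearIndependent ℝ ((realify ψ) ∘ (fun i => cQ (g i))) := by
    have heq : ((realify ψ) ∘ (fun i => cQ (g i))) = fun i : ι => Pi.single i (1 : ℝ) := by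
      funext i
      rw [Function.comp_apply, realify_apply, h1]
      funext j
      simp only [cQ, Pi.single_apply]
      split <;> simp
    rw [heq]
    have h := (Pi.basisFun ℝ ι).linearIndependent
    have heq2 : (fun i : ι => Pi.single i (1:ℝ)) = ⇑(Pi.basisFun ℝ ι) := by
      funext i; rw [Pi.basisFun_apply]
    rw [heq2]; exact h
  exact LinearIndependent.of_comp (realify ψ) h2


/-- span transfer: a rational vector which is a real combination of rational
vectors lies in their ℚ-span. -/
lemma mem_span_of_real {m : ℕ} {ι : Type} [DecidableEq ι] (T : Finset ι)
    (p : ι → (Fin m → ℚ)) (x : Fin m → ℚ) (W : ι → ℝ)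
    (hx : ∑ i ∈ T, W i • cQ (p i) = cQ x) :
    x ∈ Submodule.span ℚ (↑(T.image p) : Set (Fin m → ℚ)) := by
  set S := Submodule.span ℚ (↑(T.image p) : Set (Fin m → ℚ)) with hS
  obtain ⟨S', hcompl⟩ := Submodule.exists_isCompl S
  set π : (Fin m → ℚ) →ₗ[ℚ] (Fin m → ℚ) := S.subtype ∘ₗ S.linearProjOfIsCompl S' hcompl with hπdef
  have hπ : ∀ y ∈ S, π y = y := by
    intro y hy
    have h7 : S.linearProjOfIsCompl S' hcompl y = ⟨y, hy⟩ :=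
      Submodule.linearProjOfIsCompl_apply_left hcompl ⟨y, hy⟩
    simp [hπdef, h7]
  have hmem : ∀ i ∈ T, p i ∈ S := by
    intro i hi
    exact Submodule.subset_span (by simp [Finset.mem_image]; exact ⟨i, hi, rfl⟩)
  have key : realify π (cQ x) = cQ x := by
    rw [← hx, map_sum]
    apply Finset.sum_congr rfl
    intro i hi
    rw [map_smul, realify_apply, hπ _ (hmem i hi)]
  rw [realify_apply] at key
  have hx2 : π x = x := cQ_inj key
  have : π x ∈ S := by
    simp only [hπdef, LinearMap.comp_apply]
    exact SetLike.coe_mem _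
  rwa [hx2] at this

/-- main extraction: real nonnegative combinations of rational vectors can be
replaced by rational nonnegative combinations. -/
lemma rational_weights {m : ℕ} {ι : Type} [DecidableEq ι] :
    ∀ (n : ℕ) (T : Finset ι), T.card = n → ∀ (p : ι → (Fin m → ℚ)) (x : Fin m → ℚ) (W : ι → ℝ),
    (∀ i ∈ T, 0 ≤ W i) → (∑ i ∈ T, W i • cQ (p i) = cQ x) →
    ∃ q : ι → ℚ, (∀ i ∈ T, 0 ≤ q i) ∧ ∑ i ∈ T, q i • p i = x := by
  intro n
  induction n with
  | zero =>
    intro T hT p x W _ hx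
    rw [Finset.card_eq_zero.mp hT] at hx ⊢
    refine ⟨0, by simp, ?_⟩
    simp only [Finset.sum_empty] at hx ⊢
    have : cQ (0 : Fin m → ℚ) = 0 := by funext j; simp [cQ]
    exact cQ_inj (by rw [this, hx])
  | succ n ih =>
    intro T hT p x W hW hx
    by_cases hli : LinearIndependent ℚ (fun i : { y // y ∈ T } => p i)
    · -- independent case
      have hinj : ∀ i ∈ T, ∀ j ∈ T, p i = p j → i = j := by
        intro i hi j hj hij
        have := hli.injective (a₁ := ⟨i, hi⟩) (a₂ := ⟨j, hj⟩) hij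
        exact congrArg Subtype.val this
      have hsp := mem_span_of_real T p x W hx
      rw [Submodule.mem_span_finset] at hsp
      obtain ⟨f, -, hf⟩ := hsp
      refine ⟨fun i => f (p i), ?_, ?_⟩
      · -- nonnegativity via real independence
        have hreal : LinearIndependent ℝ (fun i : { y // y ∈ T } => cQ (p i)) :=
          indep_real hli
        have hzero : ∑ i ∈ T, ((f (p i) : ℝ) - W i) • cQ (p i) = 0 := by
          have h1 : ∑ i ∈ T, (f (p i) : ℝ) • cQ (p i) = cQ x := by
            rw [← cQ_smul_sum, ← hf, Finset.sum_image hinj]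
          rw [Finset.sum_congr rfl (fun i _ => sub_smul _ _ _), Finset.sum_sub_distrib,
            h1, hx, sub_self]
        have hco : ∀ i : { y // y ∈ T }, ((f (p i) : ℝ) - W i) = 0 := by
          apply Fintype.linearIndependent_iff.mp hreal
          rw [Finset.sum_coe_sort T (fun i => ((f (p i) : ℝ) - W i) • cQ (p i))]
          exact hzero
        intro i hi
        have h2 := hco ⟨i, hi⟩
        have h3 : (f (p i) : ℝ) = W i := by linarith [sub_eq_zero.mp h2]
        have h4 : (0 : ℝ) ≤ (f (p i) : ℝ) := h3 ▸ hW i hi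
        exact_mod_cast h4
      · rw [← hf, Finset.sum_image hinj]
    · -- dependent case: find a rational dependency and eliminate a coordinate
      rw [Fintype.linearIndependent_iff] at hli
      push_neg at hli
      obtain ⟨c, hc, i₁, hi₁⟩ := hli
      -- μ : ι → ℚ extending c or -c so that some coordinate on T is positive
      have hmain : ∃ μ : ι → ℚ, (∑ i ∈ T, μ i • p i = 0) ∧ ∃ i ∈ T, 0 < μ i := by
        by_cases hpos : 0 < c i₁
        · refine ⟨fun i => if h : i ∈ T then c ⟨i, h⟩ else 0, ?_, ⟨i₁, i₁.2, by simp [i₁.2]; exact hpos⟩⟩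
          rw [← hc, ← Finset.sum_coe_sort T (fun i => (if h : i ∈ T then c ⟨i, h⟩ else 0) • p i)]
          apply Finset.sum_congr rfl
          intro i _
          simp [i.2]
        · refine ⟨fun i => if h : i ∈ T then -c ⟨i, h⟩ else 0, ?_, ⟨i₁, i₁.2, by simp [i₁.2]; cases lt_or_gt_of_ne hi₁ with
            | inl h => linarith
            | inr h => exact absurd h (by simpa using hpos)⟩⟩
          rw [← Finset.sum_coe_sort T (fun i => (if h : i ∈ T then -c ⟨i, h⟩ else 0) • p i)]
          have : ∑ i : { y // y ∈ T }, (if h : (i : ι) ∈ T then -c ⟨i, h⟩ else 0) • p i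
              = -∑ i : { y // y ∈ T }, c i • p i := by
            rw [← Finset.sum_neg_distrib]
            apply Finset.sum_congr rfl
            intro i _
            simp [i.2, neg_smul]
          rw [this, hc, neg_zero]
      obtain ⟨μ, hμsum, i₂, hi₂T, hi₂⟩ := hmain
      -- minimize W i / μ i over positive μ
      have hPne : (T.filter (fun i => 0 < μ i)).Nonempty := ⟨i₂, Finset.mem_filter.mpr ⟨hi₂T, hi₂⟩⟩
      obtain ⟨i₀, hi₀P, hi₀min⟩ := Finset.exists_min_image (T.filter (fun i => 0 < μ i))
        (fun i => W i / (μ i : ℝ)) hPne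
      obtain ⟨hi₀T, hi₀pos⟩ := Finset.mem_filter.mp hi₀P
      set t : ℝ := W i₀ / (μ i₀ : ℝ) with ht
      have hμ₀R : (0 : ℝ) < (μ i₀ : ℝ) := by exact_mod_cast hi₀pos
      have htnn : 0 ≤ t := div_nonneg (hW i₀ hi₀T) hμ₀R.le
      set W₂ : ι → ℝ := fun i => W i - t * (μ i : ℝ) with hW₂
      have hW₂nn : ∀ i ∈ T, 0 ≤ W₂ i := by
        intro i hi
        show 0 ≤ W i - t * (μ i : ℝ)
        by_cases hμi : 0 < μ i
        · have hμiR : (0:ℝ) < (μ i : ℝ) := by exact_mod_cast hμi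
          have h5 : t ≤ W i / (μ i : ℝ) := hi₀min i (Finset.mem_filter.mpr ⟨hi, hμi⟩)
          rw [le_div_iff₀ hμiR] at h5
          linarith
        · have hμiR : ((μ i : ℝ)) ≤ 0 := by
            have h8 : μ i ≤ 0 := not_lt.mp hμi
            exact_mod_cast h8
          have h9 : t * (μ i : ℝ) ≤ 0 := mul_nonpos_of_nonneg_of_nonpos htnn hμiR
          have := hW i hi
          linarith
      have hW₂i₀ : W₂ i₀ = 0 := by
        simp only [hW₂, ht]
        field_simp
        ring
      have hsum₂ : ∑ i ∈ T.erase i₀, W₂ i • cQ (p i) = cQ x := by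
        have hz : W₂ i₀ • cQ (p i₀) = 0 := by rw [hW₂i₀, zero_smul]
        have h10 : ∑ i ∈ T, W₂ i • cQ (p i)
            = W₂ i₀ • cQ (p i₀) + ∑ i ∈ T.erase i₀, W₂ i • cQ (p i) :=
          (Finset.add_sum_erase T (fun i => W₂ i • cQ (p i)) hi₀T).symm
        rw [← zero_add (∑ i ∈ T.erase i₀, W₂ i • cQ (p i)), ← hz, ← h10]
        have hμreal : ∑ i ∈ T, (μ i : ℝ) • cQ (p i) = 0 := by
          rw [← cQ_smul_sum, hμsum]
          funext j; simp [cQ]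
        have : ∑ i ∈ T, W₂ i • cQ (p i)
            = ∑ i ∈ T, W i • cQ (p i) - t • ∑ i ∈ T, (μ i : ℝ) • cQ (p i) := by
          rw [Finset.smul_sum, ← Finset.sum_sub_distrib]
          apply Finset.sum_congr rfl
          intro i _
          simp only [hW₂, sub_smul, smul_smul]
        rw [this, hμreal, smul_zero, sub_zero, hx]
      have hcard : (T.erase i₀).card = n := by
        rw [Finset.card_erase_of_mem hi₀T, hT]
        rfl
      obtain ⟨q, hqnn, hqsum⟩ := ih (T.erase i₀) hcard p x W₂
        (fun i hi => hW₂nn i (Finset.mem_of_mem_erase hi)) hsum₂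
      refine ⟨fun i => if i = i₀ then 0 else q i, ?_, ?_⟩
      · intro i hi
        by_cases h : i = i₀
        · simp [h]
        · simp only [h, if_false]
          exact hqnn i (Finset.mem_erase.mpr ⟨h, hi⟩)
      · rw [← Finset.add_sum_erase _ _ hi₀T]
        simp only [eq_self_iff_true, if_true, zero_smul, zero_add]
        rw [← hqsum]
        apply Finset.sum_congr rfl
        intro i hi
        rw [if_neg (Finset.mem_erase.mp hi).1]

section Geometry

variable {E : Type} [DecidableEq E] [AddCommGroup E] [Module ℝ E]

/-- vertices of the convex hull of a finite set -/
def VtxS (S : Finset E) : Set E :=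
  {x | x ∈ S ∧ x ∉ convexHull ℝ (↑(S.erase x) : Set E)}

lemma vtx_mono {S : Finset E} {a x : E} (haS : a ∈ S)
    (ha : a ∈ convexHull ℝ (↑(S.erase a) : Set E))
    (hx : x ∈ VtxS (S.erase a)) : x ∈ VtxS S := by
  classical
  obtain ⟨hxea, hxnc⟩ := hx
  have hxa : x ≠ a := (Finset.mem_erase.mp hxea).1
  have hxS : x ∈ S := (Finset.mem_erase.mp hxea).2
  refine ⟨hxS, ?_⟩
  intro hxc
  set R : Finset E := (S.erase a).erase x with hR
  by_cases hRe : R = ∅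
  · have h1 : S.erase a = {x} := by
      rw [← Finset.insert_erase hxea, ← hR, hRe]
      rfl
    rw [h1] at ha
    simp only [Finset.coe_singleton, convexHull_singleton, Set.mem_singleton_iff] at ha
    exact hxa ha.symm
  · have hRne : (↑R : Set E).Nonempty := by
      rw [Finset.coe_nonempty]
      exact Finset.nonempty_iff_ne_empty.mpr hRe
    have h2 : S.erase x = insert a R := by
      ext t
      simp only [Finset.mem_erase, Finset.mem_insert, hR]
      constructor
      · rintro ⟨htx, htS⟩
        by_cases hta : t = a
        · exact Or.inl hta
        · exact Or.inr ⟨htx, hta, htS⟩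
      · rintro (rfl | ⟨htx, hta, htS⟩)
        · exact ⟨fun h => hxa h.symm, haS⟩
        · exact ⟨htx, htS⟩
    have h3 : S.erase a = insert x R := (Finset.insert_erase hxea).symm
    rw [h2] at hxc
    rw [h3] at ha
    rw [Finset.coe_insert, convexHull_insert hRne, mem_convexJoin] at hxc ha
    obtain ⟨a', ha', z, hz, hxseg⟩ := hxc
    rw [Set.mem_singleton_iff] at ha'
    rw [ha'] at hxseg
    obtain ⟨x', hx', y, hy, haseg⟩ := ha
    rw [Set.mem_singleton_iff] at hx'
    rw [hx'] at haseg
    obtain ⟨s, s', hs, hs', hss, hxeq⟩ := hxseg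
    obtain ⟨t, t', ht, ht', htt, haeq⟩ := haseg
    by_cases hst : s * t = 1
    · have hseq : s = 1 := by nlinarith
      have hs'0 : s' = 0 := by linarith
      rw [hseq, hs'0, one_smul, zero_smul, add_zero] at hxeq
      exact hxa hxeq.symm
    · have hstlt : s * t < 1 := lt_of_le_of_ne (by nlinarith) hst
      set c : ℝ := 1 - s * t with hc
      have hcpos : 0 < c := by simp only [hc]; linarith
      have h4 : x = (s*t) • x + ((s*t') • y + s' • z) := by
        calc x = s • a + s' • z := hxeq.symm
        _ = s • (t • x + t' • y) + s' • z := by rw [haeq]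
        _ = (s*t) • x + ((s*t') • y + s' • z) := by
            rw [smul_add, smul_smul, smul_smul]; abel
      have hkey : c • x = (s*t') • y + s' • z := by
        have h6 : c • x = x - (s*t) • x := by rw [hc, sub_smul, one_smul]
        rw [h6]
        nth_rewrite 1 [h4]
        abel
      have h5 : (s*t'/c) • y + (s'/c) • z = x := by
        have h7 := congrArg (fun w => c⁻¹ • w) hkey
        simp only [smul_add, smul_smul, inv_smul_smul₀ hcpos.ne'] at h7
        rw [div_eq_inv_mul, div_eq_inv_mul]
        exact h7.symm
      have hxmem : x ∈ convexHull ℝ (↑R : Set E) := by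
        have hconv : Convex ℝ (convexHull ℝ (↑R : Set E)) := convex_convexHull ℝ _
        have hcomb := hconv hy hz (div_nonneg (mul_nonneg hs ht') hcpos.le)
          (div_nonneg hs' hcpos.le)
          (by field_simp; nlinarith)
        rwa [h5] at hcomb
      exact hxnc hxmem

/-- every finite set is contained in the convex hull of the vertices of its hull -/
lemma subset_hull_vtx : ∀ (n : ℕ) (S : Finset E), S.card = n →
    (↑S : Set E) ⊆ convexHull ℝ (VtxS S) := by
  classical
  intro n
  induction n with
  | zero =>
    intro S hS
    rw [Finset.card_eq_zero.mp hS]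
    simp
  | succ n ih =>
    intro S hS a haS
    rw [Finset.mem_coe] at haS
    by_cases hac : a ∈ convexHull ℝ (↑(S.erase a) : Set E)
    · have hcard : (S.erase a).card = n := by
        rw [Finset.card_erase_of_mem haS, hS]; rfl
      have h1 : (↑(S.erase a) : Set E) ⊆ convexHull ℝ (VtxS (S.erase a)) := ih _ hcard
      have h2 : VtxS (S.erase a) ⊆ VtxS S := fun x hx => vtx_mono haS hac hx
      have h3 : convexHull ℝ (↑(S.erase a) : Set E) ⊆ convexHull ℝ (VtxS (S.erase a)) :=
        convexHull_min h1 (convex_convexHull ℝ _)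
      exact convexHull_mono h2 (h3 hac)
    · exact subset_convexHull ℝ _ ⟨haS, hac⟩

end Geometry

lemma card_finsum {ι α : Type} [DecidableEq ι] (s : Finset ι) (f : ι → Multiset α) :
    Multiset.card (∑ i ∈ s, f i) = ∑ i ∈ s, Multiset.card (f i) := by
  induction s using Finset.induction with
  | empty => simp
  | insert _ _ h ih => rw [Finset.sum_insert h, Finset.sum_insert h, Multiset.card_add, ih]

lemma sum_finsum {ι α : Type} [DecidableEq ι] [AddCommMonoid α] (s : Finset ι) (f : ι → Multiset α) :
    (∑ i ∈ s, f i).sum = ∑ i ∈ s, (f i).sum := by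
  induction s using Finset.induction with
  | empty => simp
  | insert _ _ h ih => rw [Finset.sum_insert h, Finset.sum_insert h, Multiset.sum_add, ih]

section IntLevel

variable {k : ℕ}

def cZ (v : Fin k → ℤ) : Fin k → ℝ := fun i => (v i : ℝ)

def zQ (v : Fin k → ℤ) : Fin k → ℚ := fun i => (v i : ℚ)

lemma cZ_inj : Function.Injective (cZ (k := k)) := by
  intro a b h
  funext i
  have := congrFun h i
  simp only [cZ] at this
  exact_mod_cast this

lemma key_decomp (A : Set (Fin k → ℤ)) (hfin : A.Finite) (a : Fin k → ℤ) (ha : a ∈ A) :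
    ∃ (K : ℕ) (P : Multiset (Fin k → ℤ)), 0 < K ∧
      (∀ b ∈ P, b ∈ A ∧ IsHullVertex A b) ∧ Multiset.card P = K ∧ P.sum = K • a := by
  classical
  set AF : Finset (Fin k → ℤ) := hfin.toFinset with hAF
  set SA : Finset (Fin k → ℝ) := AF.image cZ with hSA
  have hvert : ∀ b ∈ AF, cZ b ∈ VtxS SA → IsHullVertex A b := by
    intro b hbAF hb
    obtain ⟨hbSA, hbnc⟩ := hb
    have hcl : IsClosed (convexHull ℝ (↑(SA.erase (cZ b)) : Set (Fin k → ℝ))) :=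
      Set.Finite.isClosed_convexHull ℝ (Finset.finite_toSet _)
    obtain ⟨f, u, hfu, huf⟩ := geometric_hahn_banach_closed_point
      (convex_convexHull ℝ _) hcl hbnc
    refine ⟨f.toLinearMap, ?_⟩
    intro y hy hyb
    have h1 : cZ y ∈ SA.erase (cZ b) := Finset.mem_erase.mpr
      ⟨fun h => hyb (cZ_inj h), Finset.mem_image_of_mem _ (hfin.mem_toFinset.mpr hy)⟩
    have h2 := hfu (cZ y) (subset_convexHull ℝ _ h1)
    exact lt_trans h2 huf
  have h3 : cZ a ∈ convexHull ℝ (VtxS SA) :=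
    subset_hull_vtx SA.card SA rfl
      (Finset.mem_coe.mpr (Finset.mem_image_of_mem _ (hfin.mem_toFinset.mpr ha)))
  set VF : Finset (Fin k → ℤ) := AF.filter (fun b => cZ b ∈ VtxS SA) with hVF
  have h4 : VtxS SA ⊆ ↑(VF.image cZ) := by
    intro y hy
    obtain ⟨b, hbAF, rfl⟩ := Finset.mem_image.mp hy.1
    exact Finset.mem_coe.mpr (Finset.mem_image_of_mem _ (Finset.mem_filter.mpr ⟨hbAF, hy⟩))
  have h5 : cZ a ∈ convexHull ℝ (↑(VF.image cZ) : Set (Fin k → ℝ)) := convexHull_mono h4 h3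
  rw [Finset.convexHull_eq] at h5
  obtain ⟨w, hwnn, hwsum, hwcm⟩ := h5
  rw [Finset.centerMass_eq_of_sum_1 _ _ hwsum] at hwcm
  have hinj : ∀ x ∈ VF, ∀ y ∈ VF, cZ x = cZ y → x = y := fun x _ y _ h => cZ_inj h
  have hwsum' : ∑ b ∈ VF, w (cZ b) = 1 := by
    rw [Finset.sum_image hinj] at hwsum
    exact hwsum
  have hwcm' : ∑ b ∈ VF, w (cZ b) • cZ b = cZ a := by
    simp only [id] at hwcm
    rw [Finset.sum_image hinj (f := fun y => w y • y)] at hwcm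
    exact hwcm
  -- pass to ℚ^(k+1) via the (1, v) embedding
  set p : (Fin k → ℤ) → (Fin (k+1) → ℚ) := fun b => Fin.cons 1 (zQ b) with hp
  have hyp : ∑ b ∈ VF, w (cZ b) • cQ (p b) = cQ (p a) := by
    funext j
    rw [Finset.sum_apply]
    refine Fin.cases ?_ ?_ j
    · have : ∀ b, cQ (p b) 0 = 1 := fun b => by simp [cQ, hp]
      simp only [Pi.smul_apply, this, smul_eq_mul, mul_one]
      rw [hwsum']
    · intro i
      have hc : ∀ b, cQ (p b) i.succ = (b i : ℝ) := fun b => by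
        simp [cQ, hp, zQ, Fin.cons_succ]
      have := congrFun hwcm' i
      rw [Finset.sum_apply] at this
      simp only [Pi.smul_apply, hc, smul_eq_mul]
      simp only [Pi.smul_apply, cZ, smul_eq_mul] at this
      rw [this]
  obtain ⟨q, hqnn, hq⟩ := rational_weights VF.card VF rfl p (p a) (fun b => w (cZ b))
    (fun b hb => hwnn (cZ b) (Finset.mem_image_of_mem _ hb)) hyp
  have hq0 : ∑ b ∈ VF, q b = 1 := by
    have := congrFun hq 0
    rw [Finset.sum_apply] at this
    simpa [hp] using this
  have hqi : ∀ i : Fin k, ∑ b ∈ VF, q b * (b i : ℚ) = (a i : ℚ) := by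
    intro i
    have := congrFun hq i.succ
    rw [Finset.sum_apply] at this
    simpa [hp, zQ, Fin.cons_succ] using this
  -- clear denominators
  set d : ℕ := ∏ b ∈ VF, (q b).den with hd
  have hdpos : 0 < d := Finset.prod_pos (fun b _ => (q b).pos)
  set nn : (Fin k → ℤ) → ℕ := fun b => (q b * d).num.toNat with hnn
  have hval : ∀ b ∈ VF, ((nn b : ℚ)) = q b * d := by
    intro b hb
    obtain ⟨e, he⟩ := Finset.dvd_prod_of_mem (fun b => (q b).den) hb
    have h8 : (d : ℚ) = ((q b).den : ℚ) * (e : ℚ) := by exact_mod_cast he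
    have hz : ((((q b).num * e : ℤ)) : ℚ) = q b * d := by
      rw [h8, ← mul_assoc, Rat.mul_den_eq_num]
      push_cast
      ring
    have hznn' : (0:ℤ) ≤ (q b).num * e := by
      have hznn : (0:ℚ) ≤ ((((q b).num * e : ℤ)) : ℚ) := by
        rw [hz]
        exact mul_nonneg (hqnn b hb) (by positivity)
      exact_mod_cast hznn
    have hnum : (q b * d).num = (q b).num * e := by
      rw [← hz, Rat.num_intCast]
    have htn : ((((q b).num * e).toNat : ℤ)) = (q b).num * e := Int.toNat_of_nonneg hznn'
    show ((((q b * d).num.toNat : ℕ)) : ℚ) = q b * d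
    rw [hnum, ← hz]
    exact_mod_cast congrArg (fun z : ℤ => (z : ℚ)) htn
  have hcard : ∑ b ∈ VF, nn b = d := by
    have hQ : ((∑ b ∈ VF, nn b : ℕ) : ℚ) = ((d : ℕ) : ℚ) := by
      push_cast
      rw [Finset.sum_congr rfl (fun b hb => hval b hb), ← Finset.sum_mul, hq0, one_mul]
    exact_mod_cast hQ
  have hvec : ∀ i, ∑ b ∈ VF, (nn b : ℤ) * b i = (d : ℤ) * a i := by
    intro i
    have hQ : ((∑ b ∈ VF, (nn b : ℤ) * b i : ℤ) : ℚ) = (((d : ℤ) * a i : ℤ) : ℚ) := by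
      push_cast
      rw [Finset.sum_congr rfl (fun b hb => by rw [hval b hb]),
        Finset.sum_congr rfl (fun b (hb : b ∈ VF) =>
          show (q b * (d:ℚ)) * (b i : ℚ) = (d:ℚ) * (q b * (b i : ℚ)) from by ring),
        ← Finset.mul_sum, hqi i]
    exact_mod_cast hQ
  refine ⟨d, ∑ b ∈ VF, Multiset.replicate (nn b) b, hdpos, ?_, ?_, ?_⟩
  · intro b' hb'
    rw [Multiset.mem_sum] at hb'
    obtain ⟨b, hbVF, hb'mem⟩ := hb'
    have hbb : b' = b := Multiset.eq_of_mem_replicate hb'mem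
    subst hbb
    obtain ⟨hbAF, hbvtx⟩ := Finset.mem_filter.mp hbVF
    exact ⟨hfin.mem_toFinset.mp hbAF, hvert b' hbAF hbvtx⟩
  · rw [card_finsum]
    simp only [Multiset.card_replicate]
    exact hcard
  · rw [sum_finsum]
    simp only [Multiset.sum_replicate]
    funext i
    rw [Finset.sum_apply]
    simp only [Pi.smul_apply, smul_eq_mul, nsmul_eq_mul]
    exact hvec i

end IntLevel

section Reduce

variable {k : ℕ}

lemma reduce (A : Set (Fin k → ℤ)) (Vp : (Fin k → ℤ) → Prop) [DecidablePred Vp]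
    (K : (Fin k → ℤ) → ℕ) (P : (Fin k → ℤ) → Multiset (Fin k → ℤ))
    (hKpos : ∀ a ∈ A, 0 < K a)
    (hPmem : ∀ a ∈ A, ∀ b ∈ P a, b ∈ A ∧ Vp b)
    (hPcard : ∀ a ∈ A, Multiset.card (P a) = K a)
    (hPsum : ∀ a ∈ A, (P a).sum = K a • a) :
    ∀ (n : ℕ) (s : Multiset (Fin k → ℤ)),
      Multiset.card (s.filter (fun a => ¬ Vp a)) ≤ n → (∀ a ∈ s, a ∈ A) →
      ∃ s' : Multiset (Fin k → ℤ), Multiset.card s' = Multiset.card s ∧ s'.sum = s.sum ∧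
        (∀ a ∈ s', a ∈ A) ∧ ∀ a ∈ s', ¬ Vp a → s'.count a < K a := by
  classical
  intro n
  induction n with
  | zero =>
    intro s hsc hsA
    refine ⟨s, rfl, rfl, hsA, ?_⟩
    intro a haS hav
    exfalso
    have h1 : a ∈ s.filter (fun a => ¬ Vp a) := Multiset.mem_filter.mpr ⟨haS, hav⟩
    have h2 := Multiset.card_pos_iff_exists_mem.mpr ⟨a, h1⟩
    omega
  | succ n ih =>
    intro s hsc hsA
    by_cases hex : ∃ a ∈ s, ¬ Vp a ∧ K a ≤ s.count a
    · obtain ⟨a, haS, haV, haK⟩ := hex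
      have haA : a ∈ A := hsA a haS
      have hle : Multiset.replicate (K a) a ≤ s := by
        rw [Multiset.le_iff_count]
        intro x
        rw [Multiset.count_replicate]
        split
        · next h => subst h; exact haK
        · exact Nat.zero_le _
      obtain ⟨t, ht⟩ := Multiset.le_iff_exists_add.mp hle
      set s₂ := P a + t with hs2
      have htA : ∀ x ∈ t, x ∈ A := fun x hx =>
        hsA x (by rw [ht]; exact Multiset.mem_add.mpr (Or.inr hx))
      have hs₂A : ∀ x ∈ s₂, x ∈ A := by
        intro x hx
        rcases Multiset.mem_add.mp hx with h | h
        · exact (hPmem a haA x h).1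
        · exact htA x h
      have hcard₂ : Multiset.card s₂ = Multiset.card s := by
        rw [hs2, ht, Multiset.card_add, Multiset.card_add, hPcard a haA,
          Multiset.card_replicate]
      have hsum₂ : s₂.sum = s.sum := by
        rw [hs2, ht, Multiset.sum_add, Multiset.sum_add, hPsum a haA,
          Multiset.sum_replicate]
      have hfilter₂ : Multiset.card (s₂.filter (fun a => ¬ Vp a)) ≤ n := by
        have h1 : (P a).filter (fun a => ¬ Vp a) = 0 := by
          rw [Multiset.filter_eq_nil]
          exact fun x hx h => h (hPmem a haA x hx).2
        have h2 : (Multiset.replicate (K a) a).filter (fun a => ¬ Vp a)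
            = Multiset.replicate (K a) a := by
          rw [Multiset.filter_eq_self]
          intro x hx
          rw [Multiset.eq_of_mem_replicate hx]
          exact haV
        have h3 : Multiset.card (s.filter fun a => ¬ Vp a)
            = K a + Multiset.card (t.filter fun a => ¬ Vp a) := by
          rw [ht, Multiset.filter_add, Multiset.card_add, h2, Multiset.card_replicate]
        have h4 : Multiset.card (s₂.filter fun a => ¬ Vp a)
            = Multiset.card (t.filter fun a => ¬ Vp a) := by
          rw [hs2, Multiset.filter_add, Multiset.card_add, h1, Multiset.card_zero]
          omega
        have h5 := hKpos a haA
        omega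
      obtain ⟨s', h1, h2, h3, h4⟩ := ih s₂ hfilter₂ hs₂A
      exact ⟨s', by rw [h1, hcard₂], by rw [h2, hsum₂], h3, h4⟩
    · push_neg at hex
      exact ⟨s, rfl, rfl, hsA, fun a haS hav => hex a haS hav⟩

lemma exists_rep (A : Set (Fin k → ℤ)) (hsym : ∀ x ∈ A, -x ∈ A)
    (hgen : AddSubgroup.closure A = ⊤) (v : Fin k → ℤ) :
    ∃ l : List (Fin k → ℤ), (∀ a ∈ l, a ∈ A) ∧ l.sum = v := by
  have h1 : v ∈ AddSubgroup.closure A := by rw [hgen]; trivial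
  have h2 : v ∈ (AddSubgroup.closure A).toAddSubmonoid := h1
  rw [AddSubgroup.closure_toAddSubmonoid] at h2
  have h3 : A ∪ -A = A := by
    apply Set.union_eq_self_of_subset_right
    intro x hx
    rw [Set.mem_neg] at hx
    simpa using hsym _ hx
  rw [h3] at h2
  exact AddSubmonoid.exists_list_of_mem_closure h2

end Reduce
end
end Stmt14Aux

theorem stmt14 {k : ℕ} (A : Set (Fin k → ℤ)) (hfin : A.Finite)
    (hsym : ∀ x ∈ A, -x ∈ A) (h0A : (0 : Fin k → ℤ) ∉ A)
    (hgen : AddSubgroup.closure A = ⊤) :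
    ∃ Δ : ℕ, ∀ v : Fin k → ℤ,
      -- a shortest representation of v with at most Δ non-primary (secondary) summands
      ∃ lp ls : List (Fin k → ℤ),
        (∀ a ∈ lp, a ∈ A ∧ IsHullVertex A a) ∧
        (∀ a ∈ ls, a ∈ A) ∧
        ls.length ≤ Δ ∧
        (lp ++ ls).sum = v ∧
        (lp ++ ls).length = wdist A v := by
  classical
  have key' : ∀ a : Fin k → ℤ, ∃ (K : ℕ) (P : Multiset (Fin k → ℤ)), 0 < K ∧
      (a ∈ A → ((∀ b ∈ P, b ∈ A ∧ IsHullVertex A b) ∧ Multiset.card P = K ∧ P.sum = K • a)) := by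
    intro a
    by_cases ha : a ∈ A
    · obtain ⟨K, P, h1, h2, h3, h4⟩ := Stmt14Aux.key_decomp A hfin a ha
      exact ⟨K, P, h1, fun _ => ⟨h2, h3, h4⟩⟩
    · exact ⟨1, 0, one_pos, fun h => absurd h ha⟩
  choose K P hKpos hKP using key'
  refine ⟨∑ a ∈ hfin.toFinset, K a, ?_⟩
  intro v
  have hne : {n | ∃ l : List (Fin k → ℤ), l.length = n ∧ (∀ a ∈ l, a ∈ A) ∧ l.sum = v}.Nonempty := by
    obtain ⟨l, hl1, hl2⟩ := Stmt14Aux.exists_rep A hsym hgen v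
    exact ⟨l.length, l, rfl, hl1, hl2⟩
  obtain ⟨l₀, hlen, hlA, hlsum⟩ := Nat.sInf_mem hne
  set s₀ : Multiset (Fin k → ℤ) := (l₀ : Multiset (Fin k → ℤ)) with hs₀
  obtain ⟨s', hcard', hsum', hmemA', hcount'⟩ := Stmt14Aux.reduce A (IsHullVertex A) K P
    (fun a _ => hKpos a) (fun a ha => (hKP a ha).1) (fun a ha => (hKP a ha).2.1)
    (fun a ha => (hKP a ha).2.2)
    (Multiset.card (s₀.filter (fun a => ¬ IsHullVertex A a))) s₀ le_rfl
    (fun a ha => hlA a (Multiset.mem_coe.mp ha))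
  set sp := s'.filter (fun a => IsHullVertex A a) with hsp
  set ss := s'.filter (fun a => ¬ IsHullVertex A a) with hss
  have hadd : sp + ss = s' := Multiset.filter_add_not _ _
  refine ⟨sp.toList, ss.toList, ?_, ?_, ?_, ?_, ?_⟩
  · intro a haL
    rw [Multiset.mem_toList, hsp, Multiset.mem_filter] at haL
    exact ⟨hmemA' a haL.1, haL.2⟩
  · intro a haL
    rw [Multiset.mem_toList, hss, Multiset.mem_filter] at haL
    exact hmemA' a haL.1
  · rw [Multiset.length_toList]
    rw [← Multiset.toFinset_sum_count_eq ss]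
    have hsub : ss.toFinset ⊆ hfin.toFinset := by
      intro a ha
      rw [Multiset.mem_toFinset, hss, Multiset.mem_filter] at ha
      exact hfin.mem_toFinset.mpr (hmemA' a ha.1)
    calc ∑ a ∈ ss.toFinset, ss.count a ≤ ∑ a ∈ ss.toFinset, K a := by
          apply Finset.sum_le_sum
          intro a ha
          rw [Multiset.mem_toFinset, hss, Multiset.mem_filter] at ha
          have h6 := hcount' a ha.1 ha.2
          have h7 : ss.count a ≤ s'.count a :=
            Multiset.count_le_of_le a (Multiset.filter_le _ _)
          omega
      _ ≤ ∑ a ∈ hfin.toFinset, K a := Finset.sum_le_sum_of_subset hsub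
  · rw [List.sum_append, Multiset.sum_toList, Multiset.sum_toList, ← Multiset.sum_add, hadd,
      hsum']
    rw [hs₀] at *
    rw [show (↑l₀ : Multiset (Fin k → ℤ)).sum = l₀.sum from Multiset.sum_coe l₀]
    exact hlsum
  · rw [List.length_append, Multiset.length_toList, Multiset.length_toList,
      ← Multiset.card_add, hadd, hcard']
    rw [show Multiset.card (↑l₀ : Multiset (Fin k → ℤ)) = l₀.length from Multiset.coe_card l₀]
    exact hlen
end
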